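/- Assume (H1) and (H2). Let (ξ₀…ξ_{n−1}) be a word whose admissibility interval I_{[ξ₀…ξ_{n−1}]} is nonempty and set g = f_{[ξ₀…ξ_{n−1}]}. Then: (1) if g has a fixed point, the periodic sequence ξ = (ξ₀…ξ_{n−1})^ℤ belongs to Σ and exactly one of the following holds: (1a) g has exactly two fixed points p⁺ < p⁻, with g'(p⁺) > 1 (repelling) and g'(p⁻) < 1 (contracting), and I_ξ = [p⁺, p⁻]; (1b) g has exactly one fixed point p, which is parabolic (g'(p) = 1), and I_ξ = {p}; (2) if g has no fixed point then (ξ₀…ξ_{n−1})^ℤ ∉ Σ. -/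

import Mathlib

open Set MeasureTheory Filter

namespace DGR

/-- The two-sided sequence space `Σ₂ = {0,1}^ℤ`. -/
abbrev Seq2 := ℤ → Fin 2

/-- The left shift map `σ`. -/
def shift (ξ : Seq2) : Seq2 := fun n => ξ (n + 1)

/-- The constant sequence `0^ℤ`. -/
def zeroSeq : Seq2 := fun _ => 0

/-- The skew-product `F̃(ξ,x) = (σ ξ, f̃_{ξ₀} x)`. -/
def F (f0 f1 : ℝ → ℝ) (p : Seq2 × ℝ) : Seq2 × ℝ :=
  (shift p.1, if p.1 0 = 0 then f0 p.2 else f1 p.2)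

/-- The fixed point `P = (0^ℤ, 1)`. -/
def Pfix : Seq2 × ℝ := (zeroSeq, 1)

/-- The fixed point `Q = (0^ℤ, 0)`. -/
def Qfix : Seq2 × ℝ := (zeroSeq, 0)

/-- `f_ξ^n = f_{ξ_{n-1}} ∘ ⋯ ∘ f_{ξ₀}`. -/
def fIter (f0 f1 : ℝ → ℝ) (ξ : Seq2) : ℕ → ℝ → ℝ
  | 0, x => x
  | n + 1, x => (if ξ (n : ℤ) = 0 then f0 else f1) (fIter f0 f1 ξ n x)

/-- The derivative `(f_ξ^n)'(x)` (chain rule product). -/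
def fIterDeriv (f0 f1 df0 df1 : ℝ → ℝ) (ξ : Seq2) : ℕ → ℝ → ℝ
  | 0, _ => 1
  | n + 1, x => fIterDeriv f0 f1 df0 df1 ξ n x *
      (if ξ (n : ℤ) = 0 then df0 else df1) (fIter f0 f1 ξ n x)

/-- `ξ⁺` is admissible for `x`: all forward iterates are defined and stay in `[0,1]`. -/
def forwardAdmissible (f0 f1 : ℝ → ℝ) (d : ℝ) (ξ : Seq2) (x : ℝ) : Prop :=
  ∀ n : ℕ, fIter f0 f1 ξ n x ∈ Icc (0 : ℝ) 1 ∧ (ξ (n : ℤ) = 1 → d ≤ fIter f0 f1 ξ n x)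

/-- `ξ⁻` is admissible for `x`: there is a backward orbit through `x` staying in `[0,1]`. -/
def backwardAdmissible (f0 f1 : ℝ → ℝ) (d : ℝ) (ξ : Seq2) (x : ℝ) : Prop :=
  ∃ y : ℕ → ℝ, y 0 = x ∧ ∀ m : ℕ,
    y m ∈ Icc (0 : ℝ) 1 ∧
    (ξ (-(m : ℤ) - 1) = 0 → f0 (y (m + 1)) = y m) ∧
    (ξ (-(m : ℤ) - 1) = 1 → d ≤ y (m + 1) ∧ f1 (y (m + 1)) = y m)

/-- The maximal invariant set `Γ` of `F̃` in `Σ₂ × [0,1]`. -/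
def Gamma (f0 f1 : ℝ → ℝ) (d : ℝ) : Set (Seq2 × ℝ) :=
  { p | forwardAdmissible f0 f1 d p.1 p.2 ∧ backwardAdmissible f0 f1 d p.1 p.2 }

/-- The subshift `Σ = π(Γ)` of admissible sequences. -/
def SigmaA (f0 f1 : ℝ → ℝ) (d : ℝ) : Set Seq2 := Prod.fst '' Gamma f0 f1 d

/-- `I_{ξ⁺}`. -/
def Iplus (f0 f1 : ℝ → ℝ) (d : ℝ) (ξ : Seq2) : Set ℝ := { x | forwardAdmissible f0 f1 d ξ x }

/-- `I_{ξ⁻}`. -/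
def Iminus (f0 f1 : ℝ → ℝ) (d : ℝ) (ξ : Seq2) : Set ℝ := { x | backwardAdmissible f0 f1 d ξ x }

/-- `I_ξ = I_{ξ⁺} ∩ I_{ξ⁻}`, the spine over `ξ`. -/
def Ifiber (f0 f1 : ℝ → ℝ) (d : ℝ) (ξ : Seq2) : Set ℝ := Iplus f0 f1 d ξ ∩ Iminus f0 f1 d ξ

/-- `x_{ξ⁺}`, the left endpoint of `I_{ξ⁺} = [x_{ξ⁺}, 1]`. -/
noncomputable def xPlus (f0 f1 : ℝ → ℝ) (d : ℝ) (ξ : Seq2) : ℝ := sInf (Iplus f0 f1 d ξ)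

/-- `x_{ξ⁻}`, the right endpoint of `I_{ξ⁻} = [0, x_{ξ⁻}]`. -/
noncomputable def xMinus (f0 f1 : ℝ → ℝ) (d : ℝ) (ξ : Seq2) : ℝ := sSup (Iminus f0 f1 d ξ)

/-- Hypothesis (H1), stated for strictly increasing differentiable extensions
`f0, f1 : ℝ → ℝ` with derivative functions `df0, df1`, whose restrictions to
`[0,1]` resp. `[d,1]` are the fiber maps. -/
structure H1 (f0 f1 df0 df1 : ℝ → ℝ) (d : ℝ) : Prop where
  d_mem : d ∈ Ioo (0 : ℝ) 1
  mono0 : StrictMono f0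
  mono1 : StrictMono f1
  hasDeriv0 : ∀ x, HasDerivAt f0 (df0 x) x
  hasDeriv1 : ∀ x, HasDerivAt f1 (df1 x) x
  contDeriv0 : ContinuousOn df0 (Icc 0 1)
  contDeriv1 : ContinuousOn df1 (Icc d 1)
  maps0 : MapsTo f0 (Icc 0 1) (Icc 0 1)
  surj0 : SurjOn f0 (Icc 0 1) (Icc 0 1)
  maps1 : MapsTo f1 (Icc d 1) (Icc 0 1)
  deriv0_zero : 1 < df0 0
  deriv0_one : df0 1 ∈ Ioo (0 : ℝ) 1
  f0_above : ∀ x ∈ Ioo (0 : ℝ) 1, x < f0 x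
  f1_d : f1 d = 0
  f1_below : ∀ x ∈ Icc d 1, f1 x < x
  deriv1_one : 0 < df1 1

/-- Hypothesis (H2): `f₀'` strictly decreasing, `f₁'` nonincreasing. -/
def H2 (df0 df1 : ℝ → ℝ) (d : ℝ) : Prop :=
  StrictAntiOn df0 (Icc 0 1) ∧ AntitoneOn df1 (Icc d 1)

/-- Hypothesis (H2+) with constant `M`. -/
def H2plus (df0 df1 : ℝ → ℝ) (d M : ℝ) : Prop :=
  1 < M ∧
  (∀ x ∈ Icc (0 : ℝ) 1, ∀ y ∈ Icc (0 : ℝ) 1, x < y →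
    M⁻¹ * (y - x) ≤ Real.log (df0 x) - Real.log (df0 y) ∧
      Real.log (df0 x) - Real.log (df0 y) ≤ M * (y - x)) ∧
  (∀ x ∈ Icc d 1, ∀ y ∈ Icc d 1, x < y →
    M⁻¹ * (y - x) ≤ Real.log (df1 x) - Real.log (df1 y) ∧
      Real.log (df1 x) - Real.log (df1 y) ≤ M * (y - x))

/-- The fiber Lyapunov exponent `χ(μ) = ∫ log f'_{ξ₀}(x) dμ(ξ,x)`. -/
noncomputable def lyap (df0 df1 : ℝ → ℝ) (μ : Measure (Seq2 × ℝ)) : ℝ :=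
  ∫ p, Real.log ((if p.1 0 = 0 then df0 else df1) p.2) ∂μ

/-- An `F`-invariant Borel probability measure on `Γ`. -/
def IsInvGamma (f0 f1 : ℝ → ℝ) (d : ℝ) (μ : Measure (Seq2 × ℝ)) : Prop :=
  IsProbabilityMeasure μ ∧ μ (Gamma f0 f1 d) = 1 ∧ μ.map (F f0 f1) = μ

/-- An ergodic `F`-invariant Borel probability measure on `Γ`. -/
def IsErgGamma (f0 f1 : ℝ → ℝ) (d : ℝ) (μ : Measure (Seq2 × ℝ)) : Prop :=
  IsInvGamma f0 f1 d μ ∧ Ergodic (F f0 f1) μ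

/-- A `σ`-invariant Borel probability measure on `Σ`. -/
def IsInvSigma (f0 f1 : ℝ → ℝ) (d : ℝ) (ν : Measure Seq2) : Prop :=
  IsProbabilityMeasure ν ∧ ν (SigmaA f0 f1 d) = 1 ∧ ν.map shift = ν

/-- An ergodic `σ`-invariant Borel probability measure on `Σ`. -/
def IsErgSigma (f0 f1 : ℝ → ℝ) (d : ℝ) (ν : Measure Seq2) : Prop :=
  IsInvSigma f0 f1 d ν ∧ Ergodic shift ν

/-- `f_{[w]} = f_{w_{n-1}} ∘ ⋯ ∘ f_{w_0}` for a finite word `w`. -/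
def fWord (f0 f1 : ℝ → ℝ) : List (Fin 2) → ℝ → ℝ
  | [], x => x
  | i :: w, x => fWord f0 f1 w ((if i = 0 then f0 else f1) x)

/-- The derivative `(f_{[w]})'(x)`. -/
def fWordDeriv (f0 f1 df0 df1 : ℝ → ℝ) : List (Fin 2) → ℝ → ℝ
  | [], _ => 1
  | i :: w, x => (if i = 0 then df0 x else df1 x) *
      fWordDeriv f0 f1 df0 df1 w ((if i = 0 then f0 else f1) x)

/-- The word `w` is (forward) admissible at `x`. -/
def wordAdm (f0 f1 : ℝ → ℝ) (d : ℝ) : List (Fin 2) → ℝ → Prop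
  | [], x => x ∈ Icc (0 : ℝ) 1
  | i :: w, x => x ∈ Icc (0 : ℝ) 1 ∧ (i = 1 → d ≤ x) ∧
      wordAdm f0 f1 d w ((if i = 0 then f0 else f1) x)

/-- The admissibility interval `I_{[w]}`. -/
def IWord (f0 f1 : ℝ → ℝ) (d : ℝ) (w : List (Fin 2)) : Set ℝ := { x | wordAdm f0 f1 d w x }

/-- The point `a_{[w]}`, left endpoint of `I_{[w]} = [a_{[w]}, 1]`. -/
noncomputable def aWord (f0 f1 : ℝ → ℝ) (d : ℝ) (w : List (Fin 2)) : ℝ := sInf (IWord f0 f1 d w)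

/-- The periodic sequence `w^ℤ`. -/
def perSeq (w : List (Fin 2)) : Seq2 := fun n => w.getD (n % (w.length : ℤ)).toNat 0

/-- The finite word `(ξ_a, ξ_{a+1}, …, ξ_{a+n-1})` read off a sequence. -/
def seqWord (ξ : Seq2) (a : ℤ) (n : ℕ) : List (Fin 2) := List.ofFn fun i : Fin n => ξ (a + (i.1 : ℤ))

/-- `X` is a periodic point of `F` in `Γ` with period `n ≥ 1`. -/
def IsPerPt (f0 f1 : ℝ → ℝ) (d : ℝ) (X : Seq2 × ℝ) (n : ℕ) : Prop :=
  X ∈ Gamma f0 f1 d ∧ 1 ≤ n ∧ (F f0 f1)^[n] X = X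

/-- Hyperbolic periodic point (the multiplier is different from 1). -/
def IsHypPerPt (f0 f1 df0 df1 : ℝ → ℝ) (d : ℝ) (X : Seq2 × ℝ) : Prop :=
  ∃ n, IsPerPt f0 f1 d X n ∧ fIterDeriv f0 f1 df0 df1 X.1 n X.2 ≠ 1

/-- Hyperbolic periodic point of expanding type. -/
def IsExpPerPt (f0 f1 df0 df1 : ℝ → ℝ) (d : ℝ) (X : Seq2 × ℝ) : Prop :=
  ∃ n, IsPerPt f0 f1 d X n ∧ 1 < fIterDeriv f0 f1 df0 df1 X.1 n X.2

/-- Hyperbolic periodic point of contracting type. -/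
def IsConPerPt (f0 f1 df0 df1 : ℝ → ℝ) (d : ℝ) (X : Seq2 × ℝ) : Prop :=
  ∃ n, IsPerPt f0 f1 d X n ∧ 0 < fIterDeriv f0 f1 df0 df1 X.1 n X.2 ∧
    fIterDeriv f0 f1 df0 df1 X.1 n X.2 < 1

/-- Parabolic periodic point (multiplier 1). -/
def IsParPerPt (f0 f1 df0 df1 : ℝ → ℝ) (d : ℝ) (X : Seq2 × ℝ) : Prop :=
  ∃ n, IsPerPt f0 f1 d X n ∧ fIterDeriv f0 f1 df0 df1 X.1 n X.2 = 1

/-- The stable set `W^s(R, F)` of a point, for `F : Γ → Γ`. -/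
def Ws (f0 f1 : ℝ → ℝ) (d : ℝ) (R : Seq2 × ℝ) : Set (Seq2 × ℝ) :=
  { X | (∀ k : ℕ, (F f0 f1)^[k] X ∈ Gamma f0 f1 d) ∧
      Tendsto (fun k => (F f0 f1)^[k] X) atTop (nhds R) }

/-- The unstable set `W^u(R, F) = W^s(R, F⁻¹)` of a point, for `F : Γ → Γ`. -/
def Wu (f0 f1 : ℝ → ℝ) (d : ℝ) (R : Seq2 × ℝ) : Set (Seq2 × ℝ) :=
  { X | ∃ Z : ℕ → Seq2 × ℝ, Z 0 = X ∧
      (∀ m : ℕ, Z m ∈ Gamma f0 f1 d ∧ F f0 f1 (Z (m + 1)) = Z m) ∧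
      Tendsto Z atTop (nhds R) }

/-- The stable set of the orbit of `R`. -/
def WsOrbit (f0 f1 : ℝ → ℝ) (d : ℝ) (R : Seq2 × ℝ) : Set (Seq2 × ℝ) :=
  ⋃ j : ℕ, Ws f0 f1 d ((F f0 f1)^[j] R)

/-- The unstable set of the orbit of `R`. -/
def WuOrbit (f0 f1 : ℝ → ℝ) (d : ℝ) (R : Seq2 × ℝ) : Set (Seq2 × ℝ) :=
  ⋃ j : ℕ, Wu f0 f1 d ((F f0 f1)^[j] R)

/-- The homoclinic class `H(R,F)`. -/
def homClass (f0 f1 : ℝ → ℝ) (d : ℝ) (R : Seq2 × ℝ) : Set (Seq2 × ℝ) :=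
  closure (WsOrbit f0 f1 d R ∩ WuOrbit f0 f1 d R)

/-- `R₁` and `R₂` are homoclinically related. -/
def HomRel (f0 f1 : ℝ → ℝ) (d : ℝ) (R₁ R₂ : Seq2 × ℝ) : Prop :=
  (WsOrbit f0 f1 d R₁ ∩ WuOrbit f0 f1 d R₂).Nonempty ∧
  (WuOrbit f0 f1 d R₁ ∩ WsOrbit f0 f1 d R₂).Nonempty

/-- A set is (fiber) hyperbolic of expanding type. -/
def IsHypExpanding (f0 f1 df0 df1 : ℝ → ℝ) (Λ : Set (Seq2 × ℝ)) : Prop :=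
  ∃ C : ℝ, 0 < C ∧ ∃ α : ℝ, 0 < α ∧ ∀ p ∈ Λ, ∀ n : ℕ, 1 ≤ n →
    C * Real.exp (α * n) ≤ fIterDeriv f0 f1 df0 df1 p.1 n p.2

/-- A set is (fiber) hyperbolic of contracting type (backward iterates expand). -/
def IsHypContracting (f0 f1 df0 df1 : ℝ → ℝ) (d : ℝ) (Λ : Set (Seq2 × ℝ)) : Prop :=
  ∃ C : ℝ, 0 < C ∧ ∃ α : ℝ, 0 < α ∧ ∀ p ∈ Λ, ∀ Z : ℕ → Seq2 × ℝ, Z 0 = p →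
    (∀ m : ℕ, Z m ∈ Gamma f0 f1 d ∧ F f0 f1 (Z (m + 1)) = Z m) →
    ∀ n : ℕ, 1 ≤ n → fIterDeriv f0 f1 df0 df1 (Z n).1 n (Z n).2 ≤ C * Real.exp (-(α * n))

/-- The nonwandering set `Ω(Γ, F)` of `F : Γ → Γ`. -/
def nonwandering (f0 f1 : ℝ → ℝ) (d : ℝ) : Set (Seq2 × ℝ) :=
  { X | X ∈ Gamma f0 f1 d ∧ ∀ U : Set (Seq2 × ℝ), IsOpen U → X ∈ U →
      ∃ n : ℕ, 1 ≤ n ∧ ∃ Y ∈ U ∩ Gamma f0 f1 d, (F f0 f1)^[n] Y ∈ U ∩ Gamma f0 f1 d }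

/-- The finite word `w` occurs in the sequence `ξ`. -/
def OccursIn (w : List (Fin 2)) (ξ : Seq2) : Prop :=
  ∃ k : ℤ, ∀ i : ℕ, i < w.length → ξ (k + (i : ℤ)) = w.getD i 0

/-- The set `Σ^het` of heteroclinic admissible sequences. -/
def SigmaHet (f0 f1 : ℝ → ℝ) (d : ℝ) : Set Seq2 :=
  { ξ | ξ ∈ SigmaA f0 f1 d ∧ ∃ k : ℤ, ∃ w : List (Fin 2),
      (∀ m : ℤ, m < k → ξ m = 0) ∧
      (∀ i : ℕ, i < w.length → ξ (k + (i : ℤ)) = w.getD i 0) ∧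
      (∀ m : ℤ, k + (w.length : ℤ) ≤ m → ξ m = 0) ∧
      fWord f0 f1 w 1 = 0 }

/-- `Σ^cod = Σ ∖ Σ^het`. -/
def SigmaCod (f0 f1 : ℝ → ℝ) (d : ℝ) : Set Seq2 := SigmaA f0 f1 d \ SigmaHet f0 f1 d

/-- `Γ^cod = π⁻¹(Σ^cod) ∩ Γ`. -/
def GammaCod (f0 f1 : ℝ → ℝ) (d : ℝ) : Set (Seq2 × ℝ) :=
  { p ∈ Gamma f0 f1 d | p.1 ∈ SigmaCod f0 f1 d }

/-- `Σ^sing`: sequences whose spine is a singleton. -/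
def SigmaSing (f0 f1 : ℝ → ℝ) (d : ℝ) : Set Seq2 :=
  { ξ | ξ ∈ SigmaA f0 f1 d ∧ (Ifiber f0 f1 d ξ).Subsingleton }

/-- `Σ^spine`: sequences whose spine is a nondegenerate interval. -/
def SigmaSpine (f0 f1 : ℝ → ℝ) (d : ℝ) : Set Seq2 :=
  { ξ | ξ ∈ SigmaA f0 f1 d ∧ ¬ (Ifiber f0 f1 d ξ).Subsingleton }

/-- `T` restricted to `S` is topologically transitive. -/
def TransOn {α : Type*} [TopologicalSpace α] (T : α → α) (S : Set α) : Prop :=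
  ∀ U V : Set α, IsOpen U → IsOpen V → (U ∩ S).Nonempty → (V ∩ S).Nonempty →
    ∃ n : ℕ, 1 ≤ n ∧ (T^[n] '' (U ∩ S) ∩ (V ∩ S)).Nonempty

/-- `T` restricted to `S` is topologically mixing. -/
def MixOn {α : Type*} [TopologicalSpace α] (T : α → α) (S : Set α) : Prop :=
  ∀ U V : Set α, IsOpen U → IsOpen V → (U ∩ S).Nonempty → (V ∩ S).Nonempty →
    ∃ N : ℕ, ∀ n : ℕ, N ≤ n → (T^[n] '' (U ∩ S) ∩ (V ∩ S)).Nonempty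

/-- A subshift of finite type: the sequences avoiding a finite list of forbidden words. -/
def IsSFT (S : Set Seq2) : Prop :=
  ∃ Fw : Finset (List (Fin 2)), S = { ξ | ∀ w ∈ Fw, ¬ OccursIn w ξ }

/-- Number of words of length `n` appearing in sequences of `S`. -/
noncomputable def wordCount (S : Set Seq2) (n : ℕ) : ℕ :=
  Nat.card { w : List (Fin 2) // w.length = n ∧ ∃ ξ ∈ S, OccursIn w ξ }

/-- Topological entropy of the shift on a subshift `S`, as exponential growth rate of
the number of words. -/
noncomputable def subshiftEntropy (S : Set Seq2) : ℝ :=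
  Filter.limsup (fun n : ℕ => Real.log (wordCount S n) / n) Filter.atTop

/-- `Λ` is `F`-invariant. -/
def IsInvariantSet (f0 f1 : ℝ → ℝ) (Λ : Set (Seq2 × ℝ)) : Prop := F f0 f1 '' Λ = Λ

/-- `Λ` is locally maximal: it is the set of full orbits inside some neighborhood. -/
def IsLocallyMaximal (f0 f1 : ℝ → ℝ) (Λ : Set (Seq2 × ℝ)) : Prop :=
  ∃ V : Set (Seq2 × ℝ), IsOpen V ∧ Λ ⊆ V ∧
    Λ = { X | ∃ Z : ℤ → Seq2 × ℝ, Z 0 = X ∧ (∀ n : ℤ, Z (n + 1) = F f0 f1 (Z n)) ∧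
      ∀ n : ℤ, Z n ∈ V }

/-- Basic set with uniform fiber expansion. -/
def IsBasicExp (f0 f1 df0 df1 : ℝ → ℝ) (d : ℝ) (Λ : Set (Seq2 × ℝ)) : Prop :=
  Λ ⊆ Gamma f0 f1 d ∧ IsCompact Λ ∧ IsInvariantSet f0 f1 Λ ∧ IsLocallyMaximal f0 f1 Λ ∧
  TransOn (F f0 f1) Λ ∧ IsHypExpanding f0 f1 df0 df1 Λ

/-- Basic set with uniform fiber contraction. -/
def IsBasicCon (f0 f1 df0 df1 : ℝ → ℝ) (d : ℝ) (Λ : Set (Seq2 × ℝ)) : Prop :=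
  Λ ⊆ Gamma f0 f1 d ∧ IsCompact Λ ∧ IsInvariantSet f0 f1 Λ ∧ IsLocallyMaximal f0 f1 Λ ∧
  TransOn (F f0 f1) Λ ∧ IsHypContracting f0 f1 df0 df1 d Λ

/-- The entropy function `𝓗(p) = -p log p - (1-p) log (1-p)`. -/
noncomputable def entH (p : ℝ) : ℝ := -(p * Real.log p) - (1 - p) * Real.log (1 - p)

/-! ## Auxiliary lemmas -/

section Aux

variable {f0 f1 df0 df1 : ℝ → ℝ} {d : ℝ}

lemma fin2 (i : Fin 2) : i = 0 ∨ i = 1 := by fin_cases i <;> simp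

lemma H1.cont0 (h : H1 f0 f1 df0 df1 d) : Continuous f0 :=
  continuous_iff_continuousAt.2 fun x => (h.hasDeriv0 x).continuousAt

lemma H1.cont1 (h : H1 f0 f1 df0 df1 d) : Continuous f1 :=
  continuous_iff_continuousAt.2 fun x => (h.hasDeriv1 x).continuousAt

lemma H1.f0_zero (h : H1 f0 f1 df0 df1 d) : f0 0 = 0 := by
  obtain ⟨z, hz, hz0⟩ := h.surj0 (show (0:ℝ) ∈ Icc (0:ℝ) 1 by simp)
  have h1 : f0 0 ≤ f0 z := h.mono0.monotone hz.1
  have h2 := (h.maps0 (show (0:ℝ) ∈ Icc (0:ℝ) 1 by simp)).1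
  rw [hz0] at h1; linarith

lemma H1.f0_one (h : H1 f0 f1 df0 df1 d) : f0 1 = 1 := by
  obtain ⟨z, hz, hz0⟩ := h.surj0 (show (1:ℝ) ∈ Icc (0:ℝ) 1 by simp)
  have h1 : f0 z ≤ f0 1 := h.mono0.monotone hz.2
  have h2 := (h.maps0 (show (1:ℝ) ∈ Icc (0:ℝ) 1 by simp)).2
  rw [hz0] at h1; linarith

lemma H1.one_mem_d1 (h : H1 f0 f1 df0 df1 d) : (1:ℝ) ∈ Icc d 1 :=
  ⟨h.d_mem.2.le, le_refl 1⟩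

lemma H1.f1_one_lt (h : H1 f0 f1 df0 df1 d) : f1 1 < 1 := h.f1_below 1 h.one_mem_d1

lemma H1.f1_one_mem (h : H1 f0 f1 df0 df1 d) : f1 1 ∈ Icc (0:ℝ) 1 := h.maps1 h.one_mem_d1

end Aux
section Aux2

variable {f0 f1 df0 df1 : ℝ → ℝ} {d : ℝ}

@[simp] lemma fWord_nil (x : ℝ) : fWord f0 f1 [] x = x := rfl

lemma fWord_cons (i : Fin 2) (w : List (Fin 2)) (x : ℝ) :
    fWord f0 f1 (i :: w) x = fWord f0 f1 w ((if i = 0 then f0 else f1) x) := rfl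

lemma fWord_append (u v : List (Fin 2)) (x : ℝ) :
    fWord f0 f1 (u ++ v) x = fWord f0 f1 v (fWord f0 f1 u x) := by
  induction u generalizing x with
  | nil => rfl
  | cons i u ih => simp [fWord_cons, ih]

lemma fWord_strictMono (h : H1 f0 f1 df0 df1 d) (w : List (Fin 2)) :
    StrictMono (fWord f0 f1 w) := by
  induction w with
  | nil => exact fun a b hab => hab
  | cons i u ih =>
    intro a b hab
    rw [fWord_cons, fWord_cons]
    exact ih (by split <;> [exact h.mono0 hab; exact h.mono1 hab])

lemma fWord_continuous (h : H1 f0 f1 df0 df1 d) (w : List (Fin 2)) :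
    Continuous (fWord f0 f1 w) := by
  induction w with
  | nil => exact continuous_id
  | cons i u ih =>
    rw [show fWord f0 f1 (i :: u) = fun x => fWord f0 f1 u ((if i = 0 then f0 else f1) x) from rfl]
    exact ih.comp (by split <;> [exact h.cont0; exact h.cont1])

lemma hasDerivAt_fWord (h : H1 f0 f1 df0 df1 d) (w : List (Fin 2)) (x : ℝ) :
    HasDerivAt (fWord f0 f1 w) (fWordDeriv f0 f1 df0 df1 w x) x := by
  induction w generalizing x with
  | nil => exact hasDerivAt_id x
  | cons i u ih =>
    have hbase : HasDerivAt (if i = 0 then f0 else f1) ((if i = 0 then df0 x else df1 x)) x := by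
      split
      · exact h.hasDeriv0 x
      · exact h.hasDeriv1 x
    have := (ih ((if i = 0 then f0 else f1) x)).comp x hbase
    rw [show fWord f0 f1 (i :: u) = (fWord f0 f1 u) ∘ (if i = 0 then f0 else f1) from rfl]
    rw [show fWordDeriv f0 f1 df0 df1 (i :: u) x
        = (if i = 0 then df0 x else df1 x) *
          fWordDeriv f0 f1 df0 df1 u ((if i = 0 then f0 else f1) x) from rfl]
    rw [mul_comm]
    exact this

lemma wordAdm_mem_Icc {w : List (Fin 2)} {x : ℝ} (h : wordAdm f0 f1 d w x) :
    x ∈ Icc (0:ℝ) 1 := by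
  cases w with
  | nil => exact h
  | cons i u => exact h.1

lemma wordAdm_fWord_mem {w : List (Fin 2)} {x : ℝ} (h : wordAdm f0 f1 d w x) :
    fWord f0 f1 w x ∈ Icc (0:ℝ) 1 := by
  induction w generalizing x with
  | nil => exact h
  | cons i u ih => exact ih h.2.2

lemma wordAdm_of_le (h : H1 f0 f1 df0 df1 d) {w : List (Fin 2)} {x y : ℝ}
    (hx : wordAdm f0 f1 d w x) (hxy : x ≤ y) (hy : y ≤ 1) : wordAdm f0 f1 d w y := by
  induction w generalizing x y with
  | nil => exact ⟨le_trans hx.1 hxy, hy⟩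
  | cons i u ih =>
    refine ⟨⟨le_trans hx.1.1 hxy, hy⟩, fun hi => le_trans (hx.2.1 hi) hxy, ?_⟩
    refine ih hx.2.2 ?_ ?_
    · split <;> [exact h.mono0.monotone hxy; exact h.mono1.monotone hxy]
    · by_cases hi : i = 0
      · simp only [if_pos hi]
        rw [← h.f0_one]; exact h.mono0.monotone hy
      · simp only [if_neg hi]
        exact le_trans (h.mono1.monotone hy) h.f1_one_mem.2

lemma isClosed_IWord (h : H1 f0 f1 df0 df1 d) (w : List (Fin 2)) :
    IsClosed (IWord f0 f1 d w) := by
  induction w with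
  | nil => exact isClosed_Icc
  | cons i u ih =>
    have h1 : IWord f0 f1 d (i :: u)
        = (Icc (0:ℝ) 1) ∩ ({x | i = 1 → d ≤ x} ∩ (if i = 0 then f0 else f1) ⁻¹' IWord f0 f1 d u) := by
      ext x; simp [IWord, wordAdm, Set.mem_setOf_eq, and_assoc]
    rw [h1]
    refine isClosed_Icc.inter (IsClosed.inter ?_ ?_)
    · by_cases hi : i = 1
      · simp only [hi]; convert (isClosed_Ici (a := d)) using 1; ext x; simp
      · have : {x : ℝ | i = 1 → d ≤ x} = Set.univ := by
          ext x; simp [hi]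
        rw [this]; exact isClosed_univ
    · exact IsClosed.preimage (by split <;> [exact h.cont0; exact h.cont1]) ih

lemma IWord_subset_Icc (w : List (Fin 2)) : IWord f0 f1 d w ⊆ Icc (0:ℝ) 1 :=
  fun _ hx => wordAdm_mem_Icc hx

lemma one_mem_IWord (h : H1 f0 f1 df0 df1 d) {w : List (Fin 2)}
    (hI : (IWord f0 f1 d w).Nonempty) : (1:ℝ) ∈ IWord f0 f1 d w := by
  obtain ⟨x, hx⟩ := hI
  exact wordAdm_of_le h hx (wordAdm_mem_Icc hx).2 le_rfl

lemma bddBelow_IWord (w : List (Fin 2)) : BddBelow (IWord f0 f1 d w) :=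
  ⟨0, fun x hx => (wordAdm_mem_Icc hx).1⟩

lemma aWord_mem (h : H1 f0 f1 df0 df1 d) {w : List (Fin 2)}
    (hI : (IWord f0 f1 d w).Nonempty) : aWord f0 f1 d w ∈ IWord f0 f1 d w :=
  (isClosed_IWord h w).csInf_mem hI (bddBelow_IWord w)

lemma IWord_eq_Icc (h : H1 f0 f1 df0 df1 d) {w : List (Fin 2)}
    (hI : (IWord f0 f1 d w).Nonempty) :
    IWord f0 f1 d w = Icc (aWord f0 f1 d w) 1 := by
  ext x
  constructor
  · intro hx
    exact ⟨csInf_le (bddBelow_IWord w) hx, (wordAdm_mem_Icc hx).2⟩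
  · intro hx
    exact wordAdm_of_le h (aWord_mem h hI) hx.1 hx.2

end Aux2
section Aux3

variable {f0 f1 df0 df1 : ℝ → ℝ} {d : ℝ}

lemma df0_pos (h : H1 f0 f1 df0 df1 d) (h2 : H2 df0 df1 d) {x : ℝ}
    (hx : x ∈ Icc (0:ℝ) 1) : 0 < df0 x := by
  rcases eq_or_lt_of_le hx.2 with h1 | h1
  · rw [h1]; exact h.deriv0_one.1
  · exact lt_trans h.deriv0_one.1 (h2.1 hx (by constructor <;> norm_num) h1)

lemma df1_pos (h : H1 f0 f1 df0 df1 d) (h2 : H2 df0 df1 d) {x : ℝ}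
    (hx : x ∈ Icc d 1) : 0 < df1 x :=
  lt_of_lt_of_le h.deriv1_one (h2.2 hx h.one_mem_d1 hx.2)

lemma wordAdm_next (h : H1 f0 f1 df0 df1 d) {i : Fin 2} {u : List (Fin 2)} {x : ℝ}
    (hx : wordAdm f0 f1 d (i :: u) x) :
    wordAdm f0 f1 d u ((if i = 0 then f0 else f1) x) := hx.2.2

lemma fWordDeriv_cons (i : Fin 2) (u : List (Fin 2)) (x : ℝ) :
    fWordDeriv f0 f1 df0 df1 (i :: u) x = (if i = 0 then df0 x else df1 x) *
      fWordDeriv f0 f1 df0 df1 u ((if i = 0 then f0 else f1) x) := rfl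

lemma fWordDeriv_pos (h : H1 f0 f1 df0 df1 d) (h2 : H2 df0 df1 d) {w : List (Fin 2)} {x : ℝ}
    (hx : wordAdm f0 f1 d w x) : 0 < fWordDeriv f0 f1 df0 df1 w x := by
  induction w generalizing x with
  | nil => norm_num [fWordDeriv]
  | cons i u ih =>
    rw [fWordDeriv_cons]
    refine mul_pos ?_ (ih hx.2.2)
    by_cases hi : i = 0
    · simp only [if_pos hi]; exact df0_pos h h2 hx.1
    · simp only [if_neg hi]
      have hi1 : i = 1 := by rcases fin2 i with h' | h' <;> [exact absurd h' hi; exact h']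
      exact df1_pos h h2 ⟨hx.2.1 hi1, hx.1.2⟩

lemma fWordDeriv_anti (h : H1 f0 f1 df0 df1 d) (h2 : H2 df0 df1 d) {w : List (Fin 2)} {x y : ℝ}
    (hx : wordAdm f0 f1 d w x) (hy : wordAdm f0 f1 d w y) (hxy : x < y) :
    fWordDeriv f0 f1 df0 df1 w y ≤ fWordDeriv f0 f1 df0 df1 w x := by
  induction w generalizing x y with
  | nil => exact le_refl 1
  | cons i u ih =>
    have hfx := wordAdm_next h hx
    have hfy := wordAdm_next h hy
    have hmlt : (if i = 0 then f0 else f1) x < (if i = 0 then f0 else f1) y := by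
      split <;> [exact h.mono0 hxy; exact h.mono1 hxy]
    have hB := ih hfx hfy hmlt
    have hBypos := fWordDeriv_pos h h2 hfy
    have hA : (if i = 0 then df0 y else df1 y) ≤ (if i = 0 then df0 x else df1 x) := by
      by_cases hi : i = 0
      · simp only [if_pos hi]; exact (h2.1 hx.1 hy.1 hxy).le
      · have hi1 : i = 1 := by rcases fin2 i with h' | h' <;> [exact absurd h' hi; exact h']
        simp only [if_neg hi]
        exact h2.2 ⟨hx.2.1 hi1, hx.1.2⟩ ⟨hy.2.1 hi1, hy.1.2⟩ hxy.le
    have hAxpos : 0 < (if i = 0 then df0 x else df1 x) := by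
      by_cases hi : i = 0
      · simp only [if_pos hi]; exact df0_pos h h2 hx.1
      · have hi1 : i = 1 := by rcases fin2 i with h' | h' <;> [exact absurd h' hi; exact h']
        simp only [if_neg hi]; exact df1_pos h h2 ⟨hx.2.1 hi1, hx.1.2⟩
    rw [fWordDeriv_cons, fWordDeriv_cons]
    exact mul_le_mul hA hB hBypos.le hAxpos.le

lemma fWordDeriv_strictAnti (h : H1 f0 f1 df0 df1 d) (h2 : H2 df0 df1 d) {w : List (Fin 2)}
    (h0 : (0 : Fin 2) ∈ w) {x y : ℝ}
    (hx : wordAdm f0 f1 d w x) (hy : wordAdm f0 f1 d w y) (hxy : x < y) :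
    fWordDeriv f0 f1 df0 df1 w y < fWordDeriv f0 f1 df0 df1 w x := by
  induction w generalizing x y with
  | nil => simp at h0
  | cons i u ih =>
    have hfx := wordAdm_next h hx
    have hfy := wordAdm_next h hy
    have hmlt : (if i = 0 then f0 else f1) x < (if i = 0 then f0 else f1) y := by
      split <;> [exact h.mono0 hxy; exact h.mono1 hxy]
    have hBle := fWordDeriv_anti h h2 hfx hfy hmlt
    have hBypos := fWordDeriv_pos h h2 hfy
    have hBxpos := fWordDeriv_pos h h2 hfx
    rw [fWordDeriv_cons, fWordDeriv_cons]
    by_cases hi : i = 0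
    · have hAlt : df0 y < df0 x := h2.1 hx.1 hy.1 hxy
      have hAxpos : 0 < df0 x := df0_pos h h2 hx.1
      simp only [if_pos hi] at hBle hBypos ⊢
      exact mul_lt_mul hAlt hBle hBypos hAxpos.le
    · have hi1 : i = 1 := by rcases fin2 i with h' | h' <;> [exact absurd h' hi; exact h']
      have h0u : (0 : Fin 2) ∈ u := by
        rcases List.mem_cons.1 h0 with h' | h'
        · exact absurd h'.symm hi
        · exact h'
      have hBlt := ih h0u hfx hfy hmlt
      have hA : df1 y ≤ df1 x :=
        h2.2 ⟨hx.2.1 hi1, hx.1.2⟩ ⟨hy.2.1 hi1, hy.1.2⟩ hxy.le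
      have hAypos : 0 < df1 y := df1_pos h h2 ⟨hy.2.1 hi1, hy.1.2⟩
      simp only [if_neg hi] at hBlt hBypos ⊢
      exact mul_lt_mul' hA hBlt hBypos.le (lt_of_lt_of_le hAypos hA)

end Aux3
section Aux4

variable {f0 f1 df0 df1 : ℝ → ℝ} {d : ℝ}

lemma allzero_wordAdm (h : H1 f0 f1 df0 df1 d) {w : List (Fin 2)}
    (hz : ∀ i ∈ w, i = 0) {x : ℝ} (hx : x ∈ Icc (0:ℝ) 1) : wordAdm f0 f1 d w x := by
  induction w generalizing x with
  | nil => exact hx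
  | cons i u ih =>
    have hi : i = 0 := hz i (by simp)
    refine ⟨hx, fun h1 => absurd (hi ▸ h1) (by norm_num), ?_⟩
    rw [if_pos hi]
    exact ih (fun j hj => hz j (by simp [hj])) (h.maps0 hx)

lemma allzero_fWord_zero (h : H1 f0 f1 df0 df1 d) {w : List (Fin 2)}
    (hz : ∀ i ∈ w, i = 0) : fWord f0 f1 w 0 = 0 := by
  induction w with
  | nil => rfl
  | cons i u ih =>
    have hi : i = 0 := hz i (by simp)
    rw [fWord_cons, if_pos hi, h.f0_zero]
    exact ih (fun j hj => hz j (by simp [hj]))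

lemma allzero_fWord_one (h : H1 f0 f1 df0 df1 d) {w : List (Fin 2)}
    (hz : ∀ i ∈ w, i = 0) : fWord f0 f1 w 1 = 1 := by
  induction w with
  | nil => rfl
  | cons i u ih =>
    have hi : i = 0 := hz i (by simp)
    rw [fWord_cons, if_pos hi, h.f0_one]
    exact ih (fun j hj => hz j (by simp [hj]))

lemma not_wordAdm_zero (h : H1 f0 f1 df0 df1 d) {w : List (Fin 2)}
    (h1 : (1 : Fin 2) ∈ w) : ¬ wordAdm f0 f1 d w 0 := by
  induction w with
  | nil => simp at h1
  | cons i u ih =>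
    intro hadm
    by_cases hi : i = 1
    · have := hadm.2.1 hi
      linarith [h.d_mem.1]
    · have hi0 : i = 0 := by rcases fin2 i with h' | h' <;> [exact h'; exact absurd h' hi]
      have h1u : (1 : Fin 2) ∈ u := by
        rcases List.mem_cons.1 h1 with h' | h'
        · exact absurd h'.symm hi
        · exact h'
      have := hadm.2.2
      rw [if_pos hi0, h.f0_zero] at this
      exact ih h1u this

lemma aWord_pos (h : H1 f0 f1 df0 df1 d) {w : List (Fin 2)} (h1 : (1 : Fin 2) ∈ w)
    (hI : (IWord f0 f1 d w).Nonempty) : 0 < aWord f0 f1 d w := by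
  have hmem := aWord_mem h hI
  rcases eq_or_lt_of_le (wordAdm_mem_Icc hmem).1 with h' | h'
  · exact absurd (h' ▸ hmem) (not_wordAdm_zero h h1)
  · exact h'

/-- If `w` contains the letter 1 then `g` maps the left endpoint of `I_{[w]}` to 0. -/
lemma fWord_aWord_eq_zero (h : H1 f0 f1 df0 df1 d) (h2 : H2 df0 df1 d) {w : List (Fin 2)}
    (h1 : (1 : Fin 2) ∈ w) (hI : (IWord f0 f1 d w).Nonempty) :
    fWord f0 f1 w (aWord f0 f1 d w) = 0 := by
  induction w with
  | nil => simp at h1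
  | cons i u ih =>
    set a := aWord f0 f1 d (i :: u) with ha
    have hamem : wordAdm f0 f1 d (i :: u) a := aWord_mem h hI
    have hInu : (IWord f0 f1 d u).Nonempty := ⟨_, hamem.2.2⟩
    set a' := aWord f0 f1 d u with ha'
    have ha'mem : wordAdm f0 f1 d u a' := aWord_mem h hInu
    -- the lower bound for admissible points for letter i
    by_cases hu1 : (1 : Fin 2) ∈ u
    case neg =>
      -- then i = 1 and u is all zeros
      have hi1 : i = 1 := by
        rcases List.mem_cons.1 h1 with h' | h'
        · exact h'.symm
        · exact absurd h' hu1
      have hz : ∀ j ∈ u, j = 0 := by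
        intro j hj
        rcases fin2 j with h' | h'
        · exact h'
        · exact absurd (h' ▸ hj) hu1
      -- I (i::u) = Icc d 1
      have hIeq : IWord f0 f1 d (i :: u) = Icc d 1 := by
        ext x
        constructor
        · intro hx; exact ⟨hx.2.1 hi1, hx.1.2⟩
        · intro hx
          refine ⟨⟨le_trans h.d_mem.1.le hx.1, hx.2⟩, fun _ => hx.1, ?_⟩
          rw [if_neg (by simp [hi1]), ]
          exact allzero_wordAdm h hz (h.maps1 hx)
      have haeq : a = d := by
        rw [ha, aWord, hIeq, csInf_Icc h.d_mem.2.le]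
      rw [fWord_cons, haeq, if_neg (by simp [hi1]), h.f1_d]
      exact allzero_fWord_zero h hz
    case pos =>
      have ha'pos : 0 < a' := aWord_pos h hu1 hInu
      have hfa : (if i = 0 then f0 else f1) a ∈ IWord f0 f1 d u := hamem.2.2
      have hfa_ge : a' ≤ (if i = 0 then f0 else f1) a := csInf_le (bddBelow_IWord u) hfa
      -- claim equality
      have hfa_eq : (if i = 0 then f0 else f1) a = a' := by
        by_contra hne
        have hgt : a' < (if i = 0 then f0 else f1) a := lt_of_le_of_ne hfa_ge (Ne.symm hne)
        -- lower bound b for the first constraint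
        set b : ℝ := if i = 0 then 0 else d with hb
        have hba : b < a := by
          by_cases hi : i = 0
          · simp only [hb, if_pos hi]
            simp only [if_pos hi] at hgt
            by_contra hle
            push_neg at hle
            have : a = 0 := le_antisymm hle (wordAdm_mem_Icc hamem).1
            rw [this, h.f0_zero] at hgt
            linarith
          · have hi1 : i = 1 := by rcases fin2 i with h' | h' <;> [exact absurd h' hi; exact h']
            simp only [hb, if_neg hi]
            simp only [if_neg hi] at hgt
            rcases eq_or_lt_of_le (hamem.2.1 hi1) with h' | h'
            · rw [← h', h.f1_d] at hgt; linarith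
            · exact h'
        -- continuity: find x < a admissible
        have hcont : ContinuousAt (if i = 0 then f0 else f1) a := by
          split <;> [exact h.cont0.continuousAt; exact h.cont1.continuousAt]
        have hev : ∀ᶠ x in nhds a, a' < (if i = 0 then f0 else f1) x :=
          ContinuousAt.eventually_lt continuousAt_const hcont hgt
        obtain ⟨ε, hε, hball⟩ := Metric.eventually_nhds_iff.1 hev
        set x := max b (a - ε / 2) with hx
        have hxa : x < a := by
          apply max_lt hba; linarith
        have hxball : a' < (if i = 0 then f0 else f1) x := by
          apply hball
          rw [Real.dist_eq, abs_lt]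
          constructor
          · have : a - ε / 2 ≤ x := le_max_right _ _
            linarith
          · linarith
        have hxadm : wordAdm f0 f1 d (i :: u) x := by
          have hb0 : 0 ≤ b := by
            by_cases hi : i = 0
            · simp [hb, hi]
            · simp only [hb, if_neg hi]; exact h.d_mem.1.le
          have hx0 : 0 ≤ x := le_trans hb0 (le_max_left _ _)
          have hx1 : x ≤ 1 := le_trans hxa.le (wordAdm_mem_Icc hamem).2
          refine ⟨⟨hx0, hx1⟩, ?_, ?_⟩
          · intro hi1
            have hi : ¬ i = 0 := by simp [hi1]
            have hbd : b = d := by simp [hb, if_neg hi]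
            calc d = b := hbd.symm
            _ ≤ x := le_max_left _ _
          · have hmono : (if i = 0 then f0 else f1) x < (if i = 0 then f0 else f1) a := by
              split <;> [exact h.mono0 hxa; exact h.mono1 hxa]
            have hle1 : (if i = 0 then f0 else f1) x ≤ 1 :=
              le_trans hmono.le (wordAdm_mem_Icc hfa).2
            show (if i = 0 then f0 else f1) x ∈ IWord f0 f1 d u
            rw [IWord_eq_Icc h hInu]
            exact ⟨hxball.le, hle1⟩
        have : a ≤ x := csInf_le (bddBelow_IWord _) hxadm
        linarith
      rw [fWord_cons, hfa_eq]
      exact ih hu1 hInu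

lemma allone_fWord_lt (h : H1 f0 f1 df0 df1 d) {w : List (Fin 2)} (hw : w ≠ [])
    (hone : ∀ i ∈ w, i = 1) {x : ℝ} (hx : wordAdm f0 f1 d w x) : fWord f0 f1 w x < x := by
  induction w generalizing x with
  | nil => exact absurd rfl hw
  | cons i u ih =>
    have hi : i = 1 := hone i (by simp)
    have hne0 : ¬ i = 0 := by simp [hi]
    have hstep : f1 x < x := h.f1_below x ⟨hx.2.1 hi, hx.1.2⟩
    rw [fWord_cons, if_neg hne0]
    rcases List.eq_nil_or_concat u with hu | _
    · subst hu; simpa using hstep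
    · by_cases hu : u = []
      · subst hu; simpa using hstep
      · have hadm' : wordAdm f0 f1 d u (f1 x) := by
          have := hx.2.2; rwa [if_neg hne0] at this
        exact lt_trans (ih hu (fun j hj => hone j (by simp [hj])) hadm') hstep

end Aux4
section Aux5

variable {f0 f1 df0 df1 : ℝ → ℝ} {d : ℝ}

lemma fWord_take_succ (u : List (Fin 2)) (j : ℕ) (hj : j < u.length) (y : ℝ) :
    fWord f0 f1 (u.take (j+1)) y
      = (if u.getD j 0 = 0 then f0 else f1) (fWord f0 f1 (u.take j) y) := by
  induction u generalizing j y with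
  | nil => simp at hj
  | cons i u ih =>
    cases j with
    | zero => simp [fWord_cons]
    | succ j =>
      simp only [List.take_succ_cons, fWord_cons, List.getD_cons_succ]
      exact ih j (by simpa using hj) _

lemma fWord_take_mem {u : List (Fin 2)} {y : ℝ} (h : wordAdm f0 f1 d u y) (j : ℕ) :
    fWord f0 f1 (u.take j) y ∈ Icc (0:ℝ) 1 := by
  induction u generalizing y j with
  | nil => simpa [wordAdm] using h
  | cons i u ih =>
    cases j with
    | zero => simpa using h.1
    | succ j =>
      simp only [List.take_succ_cons, fWord_cons]
      exact ih h.2.2 j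

lemma fWord_take_d {u : List (Fin 2)} {y : ℝ} (h : wordAdm f0 f1 d u y) (j : ℕ)
    (hj : j < u.length) (h1 : u.getD j 0 = 1) : d ≤ fWord f0 f1 (u.take j) y := by
  induction u generalizing y j with
  | nil => simp at hj
  | cons i u ih =>
    cases j with
    | zero => simpa using h.2.1 (by simpa using h1)
    | succ j =>
      simp only [List.take_succ_cons, fWord_cons]
      exact ih h.2.2 j (by simpa using hj) (by simpa using h1)

lemma wordAdm_of_take {u : List (Fin 2)} {y : ℝ}
    (hmem : ∀ j, fWord f0 f1 (u.take j) y ∈ Icc (0:ℝ) 1)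
    (hd : ∀ j, j < u.length → u.getD j 0 = 1 → d ≤ fWord f0 f1 (u.take j) y) :
    wordAdm f0 f1 d u y := by
  induction u generalizing y with
  | nil => simpa [wordAdm] using hmem 0
  | cons i u ih =>
    refine ⟨by simpa using hmem 0, fun hi => by simpa using hd 0 (by simp) (by simpa using hi), ?_⟩
    show wordAdm f0 f1 d u ((if i = 0 then f0 else f1) y)
    refine ih (fun j => ?_) (fun j hj h1 => ?_)
    · have := hmem (j+1)
      simpa only [List.take_succ_cons, fWord_cons] using this
    · have := hd (j+1) (by simpa using Nat.succ_lt_succ hj) (by simpa using h1)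
      simpa only [List.take_succ_cons, fWord_cons] using this

end Aux5
section Aux6

variable {f0 f1 df0 df1 : ℝ → ℝ} {d : ℝ}

lemma fIter_succ (ξ : Seq2) (n : ℕ) (x : ℝ) :
    fIter f0 f1 ξ (n+1) x = (if ξ (n : ℤ) = 0 then f0 else f1) (fIter f0 f1 ξ n x) := rfl

lemma fIter_head (ξ : Seq2) (m : ℕ) (x : ℝ) :
    fIter f0 f1 ξ (m+1) x = fIter f0 f1 (shift ξ) m ((if ξ 0 = 0 then f0 else f1) x) := by
  induction m with
  | zero => rfl
  | succ m ih =>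
    have hl : ξ (((m+1:ℕ)) : ℤ) = shift ξ ((m:ℕ) : ℤ) := by
      show ξ _ = ξ _; congr 1 <;> omega
    rw [fIter_succ ξ (m+1), ih, fIter_succ (shift ξ) m, hl]

lemma fIter_add (ξ : Seq2) (m k : ℕ) (x : ℝ) :
    fIter f0 f1 ξ (m + k) x = fIter f0 f1 (fun j => ξ (j + m)) k (fIter f0 f1 ξ m x) := by
  induction k with
  | zero => rfl
  | succ k ih =>
    rw [show m + (k+1) = (m+k)+1 from rfl, fIter_succ, ih, fIter_succ]
    have hl : ξ (((m+k:ℕ)) : ℤ) = ξ ((k : ℤ) + m) := by congr 1 <;> omega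
    rw [hl]

lemma fIter_eq_fWord (u : List (Fin 2)) (ξ : Seq2)
    (hm : ∀ i : ℕ, i < u.length → ξ (i : ℤ) = u.getD i 0) (x : ℝ) :
    fIter f0 f1 ξ u.length x = fWord f0 f1 u x := by
  induction u generalizing ξ x with
  | nil => rfl
  | cons i u ih =>
    rw [show (i :: u).length = u.length + 1 from rfl, fIter_head, fWord_cons]
    have h0 : ξ 0 = i := by simpa using hm 0 (by simp)
    rw [h0]
    refine ih (shift ξ) (fun j hj => ?_) _
    have := hm (j+1) (by simpa using Nat.succ_lt_succ hj)
    rw [show ((j+1:ℕ):ℤ) = (j:ℤ)+1 by omega] at this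
    simpa [shift] using this

lemma forwardAdmissible_cons (ξ : Seq2) (x : ℝ) :
    forwardAdmissible f0 f1 d ξ x ↔
      x ∈ Icc (0:ℝ) 1 ∧ (ξ 0 = 1 → d ≤ x) ∧
        forwardAdmissible f0 f1 d (shift ξ) ((if ξ 0 = 0 then f0 else f1) x) := by
  constructor
  · intro hf
    refine ⟨(hf 0).1, (hf 0).2, fun m => ?_⟩
    have h := hf (m+1)
    rw [fIter_head] at h
    have hl : ξ (((m+1:ℕ)) : ℤ) = shift ξ ((m:ℕ) : ℤ) := by
      show ξ _ = ξ _; congr 1 <;> omega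
    rw [hl] at h
    exact h
  · rintro ⟨h0, hd, hf⟩ m
    cases m with
    | zero => exact ⟨h0, hd⟩
    | succ m =>
      have h := hf m
      rw [← fIter_head] at h
      have hl : ξ (((m+1:ℕ)) : ℤ) = shift ξ ((m:ℕ) : ℤ) := by
        show ξ _ = ξ _; congr 1 <;> omega
      rw [← hl] at h
      exact h

lemma perSeq_nat {w : List (Fin 2)} (hw : w ≠ []) {k : ℕ} (hk : k < w.length) :
    perSeq w (k : ℤ) = w.getD k 0 := by
  have hn : 0 < w.length := List.length_pos_iff.2 hw
  unfold perSeq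
  have h1 : ((k:ℤ) % (w.length : ℤ)) = (k : ℤ) :=
    Int.emod_eq_of_lt (by positivity) (by exact_mod_cast hk)
  rw [h1]
  simp

lemma perSeq_add (w : List (Fin 2)) (hw : w ≠ []) (m : ℤ) :
    perSeq w (m + w.length) = perSeq w m := by
  unfold perSeq
  have h1 : (m + (w.length:ℤ)) % (w.length:ℤ) = m % (w.length:ℤ) := by
    conv_lhs => rw [show m + (w.length:ℤ) = m + (w.length:ℤ) * 1 by ring]
    exact Int.add_mul_emod_self_left ..
  rw [h1]

lemma perSeq_shift_eq (w : List (Fin 2)) (hw : w ≠ []) :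
    (fun j : ℤ => perSeq w (j + w.length)) = perSeq w := by
  funext m; exact perSeq_add w hw m

lemma perSeq_neg {w : List (Fin 2)} (hw : w ≠ []) (m : ℕ) :
    perSeq w (-(m:ℤ) - 1) = w.getD (w.length - 1 - m % w.length) 0 := by
  have hn : 0 < w.length := List.length_pos_iff.2 hw
  set n := w.length with hdefn
  have hr : m % n < n := Nat.mod_lt _ hn
  have hqr : m = n * (m / n) + m % n := (Nat.div_add_mod m n).symm
  unfold perSeq
  have key : (-(m:ℤ) - 1) % (n:ℤ) = ((n : ℤ) - 1 - (m % n : ℕ)) := by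
    have h1 : (-(m:ℤ) - 1) = ((n:ℤ) - 1 - (m % n : ℕ)) + (n:ℤ) * (-((m / n : ℕ):ℤ) - 1) := by
      have hqr' : (m:ℤ) = (n:ℤ) * ((m / n : ℕ):ℤ) + ((m % n : ℕ):ℤ) := by exact_mod_cast hqr
      linear_combination -hqr'
    rw [h1, Int.add_mul_emod_self_left]
    refine Int.emod_eq_of_lt ?_ ?_
    · have : ((m % n : ℕ):ℤ) < (n:ℤ) := by exact_mod_cast hr
      linarith
    · have : (0:ℤ) ≤ ((m % n : ℕ):ℤ) := by positivity
      linarith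
  rw [← hdefn, key]
  congr 1
  omega

lemma fIter_per_word (h : H1 f0 f1 df0 df1 d) {w : List (Fin 2)} (hw : w ≠ []) (x : ℝ) :
    fIter f0 f1 (perSeq w) w.length x = fWord f0 f1 w x :=
  fIter_eq_fWord w (perSeq w) (fun i hi => perSeq_nat hw hi) x

lemma perSeq_add_mul (w : List (Fin 2)) (hw : w ≠ []) (q : ℕ) (m : ℤ) :
    perSeq w (m + ((q * w.length : ℕ):ℤ)) = perSeq w m := by
  induction q with
  | zero => simp
  | succ q ih =>
    rw [show m + (((q+1) * w.length : ℕ):ℤ) = (m + ((q * w.length:ℕ):ℤ)) + (w.length:ℤ) by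
        push_cast; ring,
      perSeq_add w hw, ih]

lemma fIter_per_mul (h : H1 f0 f1 df0 df1 d) {w : List (Fin 2)} (hw : w ≠ []) (q : ℕ) (x : ℝ) :
    fIter f0 f1 (perSeq w) (q * w.length) x = (fWord f0 f1 w)^[q] x := by
  induction q generalizing x with
  | zero => simp [fIter]
  | succ q ih =>
    rw [show (q+1) * w.length = q * w.length + w.length by ring, fIter_add]
    have hs : (fun j : ℤ => perSeq w (j + ((q * w.length : ℕ):ℤ))) = perSeq w := by
      funext m; exact perSeq_add_mul w hw q m
    rw [hs, ih, fIter_per_word h hw, Function.iterate_succ_apply']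

end Aux6
section Aux7

variable {f0 f1 df0 df1 : ℝ → ℝ} {d : ℝ}

lemma getD_take {w : List (Fin 2)} {i j : ℕ} (hij : i < j) :
    (w.take j).getD i 0 = w.getD i 0 := by
  rcases lt_or_ge i w.length with h | h
  · rw [List.getD_eq_getElem _ _ (by simp [List.length_take]; omega),
      List.getD_eq_getElem _ _ h, List.getElem_take]
  · rw [List.getD_eq_default _ _ (by simp [List.length_take]; omega),
      List.getD_eq_default _ _ h]

lemma fIter_per_decomp (h : H1 f0 f1 df0 df1 d) {w : List (Fin 2)} (hw : w ≠ [])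
    (q j : ℕ) (hj : j ≤ w.length) (x : ℝ) :
    fIter f0 f1 (perSeq w) (q * w.length + j) x
      = fWord f0 f1 (w.take j) ((fWord f0 f1 w)^[q] x) := by
  rw [fIter_add, fIter_per_mul h hw]
  have hs : (fun t : ℤ => perSeq w (t + ((q * w.length : ℕ):ℤ))) = perSeq w := by
    funext m; exact perSeq_add_mul w hw q m
  rw [hs]
  have hlen : (w.take j).length = j := by simp [List.length_take]; omega
  have := fIter_eq_fWord (f0 := f0) (f1 := f1) (w.take j) (perSeq w)
    (fun i hi => by
      rw [hlen] at hi
      rw [perSeq_nat hw (lt_of_lt_of_le hi hj), getD_take hi]) ((fWord f0 f1 w)^[q] x)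
  rwa [hlen] at this

lemma perSeq_mul_add {w : List (Fin 2)} (hw : w ≠ []) (q j : ℕ) (hj : j < w.length) :
    perSeq w ((q * w.length + j : ℕ) : ℤ) = w.getD j 0 := by
  rw [show ((q * w.length + j : ℕ) : ℤ) = (j : ℤ) + ((q * w.length : ℕ):ℤ) by push_cast; ring,
    perSeq_add_mul w hw, perSeq_nat hw hj]

lemma fwd_per_to_iterates (h : H1 f0 f1 df0 df1 d) {w : List (Fin 2)} (hw : w ≠ []) {x : ℝ}
    (hf : forwardAdmissible f0 f1 d (perSeq w) x) (q : ℕ) :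
    wordAdm f0 f1 d w ((fWord f0 f1 w)^[q] x) := by
  apply wordAdm_of_take
  · intro j
    rcases le_or_gt j w.length with hj | hj
    · have := (hf (q * w.length + j)).1
      rwa [fIter_per_decomp h hw q j hj] at this
    · rw [List.take_of_length_le hj.le]
      have := (hf ((q+1) * w.length)).1
      rw [fIter_per_mul h hw, Function.iterate_succ_apply'] at this
      exact this
  · intro j hjlt h1
    have hl : perSeq w ((q * w.length + j : ℕ) : ℤ) = 1 := by
      rw [perSeq_mul_add hw q j hjlt]; exact h1
    have := (hf (q * w.length + j)).2 hl
    rwa [fIter_per_decomp h hw q j hjlt.le] at this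

lemma fwd_per_of_iterates (h : H1 f0 f1 df0 df1 d) {w : List (Fin 2)} (hw : w ≠ []) {x : ℝ}
    (hq : ∀ q : ℕ, wordAdm f0 f1 d w ((fWord f0 f1 w)^[q] x)) :
    forwardAdmissible f0 f1 d (perSeq w) x := by
  intro m
  have hn : 0 < w.length := List.length_pos_iff.2 hw
  have hm : m = m / w.length * w.length + m % w.length := by
    rw [mul_comm]
    exact (Nat.div_add_mod m w.length).symm
  have hlt : m % w.length < w.length := Nat.mod_lt _ hn
  constructor
  · rw [hm, fIter_per_decomp h hw _ _ hlt.le]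
    exact fWord_take_mem (hq _) _
  · intro h1
    rw [hm] at h1 ⊢
    rw [perSeq_mul_add hw _ _ hlt] at h1
    rw [fIter_per_decomp h hw _ _ hlt.le]
    exact fWord_take_d (hq _) _ hlt h1

end Aux7
section Aux8

variable {f0 f1 df0 df1 : ℝ → ℝ} {d : ℝ}

lemma bwd_chain {w : List (Fin 2)} (hw : w ≠ []) {y : ℕ → ℝ}
    (hy : ∀ m : ℕ, y m ∈ Icc (0:ℝ) 1 ∧
      (perSeq w (-(m : ℤ) - 1) = 0 → f0 (y (m + 1)) = y m) ∧
      (perSeq w (-(m : ℤ) - 1) = 1 → d ≤ y (m + 1) ∧ f1 (y (m + 1)) = y m))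
    (k : ℕ) : ∀ j, j ≤ w.length →
      fWord f0 f1 (w.take j) (y ((k+1) * w.length)) = y ((k+1) * w.length - j) := by
  have hn : 0 < w.length := List.length_pos_iff.2 hw
  have hexp : (k+1) * w.length = k * w.length + w.length := by ring
  intro j
  induction j with
  | zero => intro _; simp
  | succ j ih =>
    intro hj1
    have hj : j < w.length := hj1
    rw [fWord_take_succ _ _ hj, ih hj.le]
    set m : ℕ := (k+1) * w.length - j - 1 with hm
    have hmn : m % w.length = w.length - j - 1 := by
      have h1 : m = k * w.length + (w.length - j - 1) := by omega
      rw [h1, add_comm, Nat.add_mul_mod_self_right]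
      exact Nat.mod_eq_of_lt (by omega)
    have hletter : perSeq w (-(m:ℤ) - 1) = w.getD j 0 := by
      rw [perSeq_neg hw, hmn]
      congr 1 <;> omega
    have hm1 : m + 1 = (k+1) * w.length - j := by omega
    have hm2 : (k+1) * w.length - (j+1) = m := by omega
    have hcond := hy m
    rcases fin2 (w.getD j 0) with h0 | h1
    · rw [h0, if_pos rfl]
      have := hcond.2.1 (by rw [hletter, h0])
      rw [hm1] at this
      rw [this, hm2]
    · rw [h1, if_neg (by simp [h1])]
      have := (hcond.2.2 (by rw [hletter, h1])).2
      rw [hm1] at this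
      rw [this, hm2]

lemma bwd_d_cond {w : List (Fin 2)} (hw : w ≠ []) {y : ℕ → ℝ}
    (hy : ∀ m : ℕ, y m ∈ Icc (0:ℝ) 1 ∧
      (perSeq w (-(m : ℤ) - 1) = 0 → f0 (y (m + 1)) = y m) ∧
      (perSeq w (-(m : ℤ) - 1) = 1 → d ≤ y (m + 1) ∧ f1 (y (m + 1)) = y m))
    (k : ℕ) {j : ℕ} (hj : j < w.length) (h1 : w.getD j 0 = 1) :
    d ≤ y ((k+1) * w.length - j) := by
  have hn : 0 < w.length := List.length_pos_iff.2 hw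
  have hexp : (k+1) * w.length = k * w.length + w.length := by ring
  set m : ℕ := (k+1) * w.length - j - 1 with hm
  have hmn : m % w.length = w.length - j - 1 := by
    have hh : m = k * w.length + (w.length - j - 1) := by omega
    rw [hh, add_comm, Nat.add_mul_mod_self_right]
    exact Nat.mod_eq_of_lt (by omega)
  have hletter : perSeq w (-(m:ℤ) - 1) = w.getD j 0 := by
    rw [perSeq_neg hw, hmn]
    congr 1 <;> omega
  have hm1 : m + 1 = (k+1) * w.length - j := by omega
  have := ((hy m).2.2 (by rw [hletter, h1])).1
  rwa [hm1] at this

lemma bwd_per_extract (h : H1 f0 f1 df0 df1 d) {w : List (Fin 2)} (hw : w ≠ []) {x : ℝ}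
    (hb : backwardAdmissible f0 f1 d (perSeq w) x) :
    ∃ z : ℕ → ℝ, z 0 = x ∧ ∀ k, wordAdm f0 f1 d w (z (k+1)) ∧
      fWord f0 f1 w (z (k+1)) = z k := by
  obtain ⟨y, hy0, hy⟩ := hb
  have hn : 0 < w.length := List.length_pos_iff.2 hw
  refine ⟨fun k => y (k * w.length), by simpa using hy0, fun k => ?_⟩
  have hchain := bwd_chain hw hy k
  constructor
  · apply wordAdm_of_take
    · intro j
      rcases le_or_gt j w.length with hj | hj
      · rw [hchain j hj]; exact (hy _).1
      · rw [List.take_of_length_le hj.le]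
        have := hchain w.length le_rfl
        rw [List.take_length] at this
        rw [this]
        exact (hy _).1
    · intro j hjlt h1
      rw [hchain j hjlt.le]
      exact bwd_d_cond hw hy k hjlt h1
  · have := hchain w.length le_rfl
    rw [List.take_length] at this
    rw [this]
    congr 1
    have : (k+1) * w.length = k * w.length + w.length := by ring
    omega

lemma bwd_per_construct (h : H1 f0 f1 df0 df1 d) {w : List (Fin 2)} (hw : w ≠ []) {x : ℝ}
    (z : ℕ → ℝ) (hz0 : z 0 = x)
    (hmem : ∀ k, wordAdm f0 f1 d w (z k))
    (hstep : ∀ k, fWord f0 f1 w (z (k+1)) = z k) :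
    backwardAdmissible f0 f1 d (perSeq w) x := by
  have hn : 0 < w.length := List.length_pos_iff.2 hw
  refine ⟨fun m => fWord f0 f1 (w.take (w.length - m % w.length)) (z (m / w.length + 1)),
    ?_, fun m => ?_⟩
  · simp only [Nat.zero_mod, Nat.zero_div, Nat.sub_zero, List.take_length]
    rw [hstep 0, hz0]
  · have hr : m % w.length < w.length := Nat.mod_lt _ hn
    have hd : w.length * (m / w.length) + m % w.length = m := Nat.div_add_mod m w.length
    have hmul1 : (m / w.length + 1) * w.length = w.length * (m / w.length) + w.length := by ring
    have hidx : w.length - 1 - m % w.length = w.length - m % w.length - 1 := by omega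
    have hE1 : fWord f0 f1 (w.take (w.length - m % w.length)) (z (m / w.length + 1))
        = (if w.getD (w.length - m % w.length - 1) 0 = 0 then f0 else f1)
            (fWord f0 f1 (w.take (w.length - m % w.length - 1)) (z (m / w.length + 1))) := by
      conv_lhs => rw [show w.length - m % w.length = (w.length - m % w.length - 1) + 1 by omega]
      rw [fWord_take_succ _ _ (by omega)]
    have hE2 : fWord f0 f1 (w.take (w.length - (m+1) % w.length)) (z ((m+1) / w.length + 1))
        = fWord f0 f1 (w.take (w.length - m % w.length - 1)) (z (m / w.length + 1)) := by
      rcases eq_or_lt_of_le (Nat.succ_le_of_lt hr) with hlast | hmid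
      · have h1 : (m+1) % w.length = 0 := by
          rw [show m + 1 = 0 + (m / w.length + 1) * w.length by omega]
          rw [Nat.add_mul_mod_self_right]
          simp
        have h2 : (m+1) / w.length = m / w.length + 1 := by
          rw [show m + 1 = 0 + (m / w.length + 1) * w.length by omega]
          rw [Nat.add_mul_div_right _ _ hn]
          simp
        rw [h1, h2]
        simp only [Nat.sub_zero, List.take_length]
        rw [hstep (m / w.length + 1)]
        rw [show w.length - m % w.length - 1 = 0 by omega]
        simp
      · have h1 : (m+1) % w.length = m % w.length + 1 := by
          rw [show m + 1 = (m % w.length + 1) + (m / w.length) * w.length by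
            rw [mul_comm]; omega]
          rw [Nat.add_mul_mod_self_right, Nat.mod_eq_of_lt hmid]
        have h2 : (m+1) / w.length = m / w.length := by
          rw [show m + 1 = (m % w.length + 1) + (m / w.length) * w.length by
            rw [mul_comm]; omega]
          rw [Nat.add_mul_div_right _ _ hn, Nat.div_eq_of_lt hmid, zero_add]
        rw [h1, h2]
        congr 2 <;> omega
    have hletter : perSeq w (-(m:ℤ) - 1) = w.getD (w.length - m % w.length - 1) 0 := by
      rw [perSeq_neg hw, hidx]
    refine ⟨fWord_take_mem (hmem _) _, fun h0 => ?_, fun h1 => ?_⟩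
    · rw [hletter] at h0
      show f0 (fWord f0 f1 (w.take (w.length - (m+1) % w.length)) (z ((m+1) / w.length + 1)))
        = fWord f0 f1 (w.take (w.length - m % w.length)) (z (m / w.length + 1))
      rw [hE2, hE1, if_pos h0]
    · rw [hletter] at h1
      constructor
      · show d ≤ fWord f0 f1 (w.take (w.length - (m+1) % w.length)) (z ((m+1) / w.length + 1))
        rw [hE2]
        exact fWord_take_d (hmem _) _ (by omega) h1
      · show f1 (fWord f0 f1 (w.take (w.length - (m+1) % w.length)) (z ((m+1) / w.length + 1)))
          = fWord f0 f1 (w.take (w.length - m % w.length)) (z (m / w.length + 1))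
        rw [hE2, hE1, if_neg (by rw [h1]; decide)]

end Aux8
section Aux9

variable {f0 f1 df0 df1 : ℝ → ℝ} {d : ℝ}

lemma nofix_fwd (h : H1 f0 f1 df0 df1 d) {w : List (Fin 2)} {x : ℝ}
    (horb : ∀ k, wordAdm f0 f1 d w ((fWord f0 f1 w)^[k] x))
    (hgx : fWord f0 f1 w x < x)
    (hnofix : ∀ y, wordAdm f0 f1 d w y → y ≤ x → fWord f0 f1 w y ≠ y) : False := by
  set u : ℕ → ℝ := fun k => (fWord f0 f1 w)^[k] x with hu
  have hanti : ∀ k, u (k+1) < u k := by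
    intro k
    induction k with
    | zero => simpa [hu] using hgx
    | succ k ih =>
      have : fWord f0 f1 w (u (k+1)) < fWord f0 f1 w (u k) := fWord_strictMono h w ih
      simpa [hu, ← Function.iterate_succ_apply' (fWord f0 f1 w)] using this
  have hmono : Antitone u := antitone_nat_of_succ_le fun k => (hanti k).le
  have hbdd : BddBelow (Set.range u) :=
    ⟨0, by rintro _ ⟨k, rfl⟩; exact (wordAdm_mem_Icc (horb k)).1⟩
  have hlim : Tendsto u atTop (nhds (⨅ k, u k)) := tendsto_atTop_ciInf hmono hbdd
  set L := ⨅ k, u k with hL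
  have hLmem : L ∈ IWord f0 f1 d w :=
    (isClosed_IWord h w).mem_of_tendsto hlim (Filter.Eventually.of_forall horb)
  have hLle : L ≤ x := by
    have := ciInf_le hbdd 0
    simpa [hu] using this
  have hfix : fWord f0 f1 w L = L := by
    have h1 : Tendsto (fun k => fWord f0 f1 w (u k)) atTop (nhds (fWord f0 f1 w L)) :=
      ((fWord_continuous h w).tendsto L).comp hlim
    have h2 : (fun k => fWord f0 f1 w (u k)) = fun k => u (k+1) := by
      funext k; simp [hu, ← Function.iterate_succ_apply' (fWord f0 f1 w)]
    rw [h2] at h1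
    have h3 : Tendsto (fun k => u (k+1)) atTop (nhds L) :=
      hlim.comp (tendsto_add_atTop_nat 1)
    exact tendsto_nhds_unique h1 h3
  exact hnofix L hLmem hLle hfix

lemma nofix_bwd (h : H1 f0 f1 df0 df1 d) {w : List (Fin 2)} (z : ℕ → ℝ)
    (hmem : ∀ k, wordAdm f0 f1 d w (z k))
    (hstep : ∀ k, fWord f0 f1 w (z (k+1)) = z k)
    (hgx : fWord f0 f1 w (z 0) < z 0)
    (hnofix : ∀ y, wordAdm f0 f1 d w y → z 0 ≤ y → fWord f0 f1 w y ≠ y) : False := by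
  have hlt : ∀ k, z k < z (k+1) := by
    intro k
    induction k with
    | zero =>
      have h1 : fWord f0 f1 w (z 0) < fWord f0 f1 w (z 1) := by rw [hstep 0]; exact hgx
      exact (fWord_strictMono h w).lt_iff_lt.mp h1
    | succ k ih =>
      have h1 : fWord f0 f1 w (z (k+1)) < fWord f0 f1 w (z (k+2)) := by
        rw [hstep (k+1), hstep k]; exact ih
      exact (fWord_strictMono h w).lt_iff_lt.mp h1
  have hmono : Monotone z := monotone_nat_of_le_succ fun k => (hlt k).le
  have hbdd : BddAbove (Set.range z) :=
    ⟨1, by rintro _ ⟨k, rfl⟩; exact (wordAdm_mem_Icc (hmem k)).2⟩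
  have hlim : Tendsto z atTop (nhds (⨆ k, z k)) := tendsto_atTop_ciSup hmono hbdd
  set L := ⨆ k, z k with hL
  have hLmem : L ∈ IWord f0 f1 d w :=
    (isClosed_IWord h w).mem_of_tendsto hlim (Filter.Eventually.of_forall hmem)
  have hLge : z 0 ≤ L := le_ciSup hbdd 0
  have hfix : fWord f0 f1 w L = L := by
    have h1 : Tendsto (fun k => fWord f0 f1 w (z (k+1))) atTop (nhds (fWord f0 f1 w L)) :=
      ((fWord_continuous h w).tendsto L).comp (hlim.comp (tendsto_add_atTop_nat 1))
    have h2 : (fun k => fWord f0 f1 w (z (k+1))) = fun k => z k := by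
      funext k; exact hstep k
    rw [h2] at h1
    exact tendsto_nhds_unique h1 hlim
  exact hnofix L hLmem hLge hfix

lemma per_fixed_in_fiber (h : H1 f0 f1 df0 df1 d) {w : List (Fin 2)} (hw : w ≠ []) {p : ℝ}
    (hp : wordAdm f0 f1 d w p) (hfix : fWord f0 f1 w p = p) :
    p ∈ Ifiber f0 f1 d (perSeq w) := by
  constructor
  · show forwardAdmissible f0 f1 d (perSeq w) p
    apply fwd_per_of_iterates h hw
    intro q
    rw [Function.iterate_fixed hfix]
    exact hp
  · show backwardAdmissible f0 f1 d (perSeq w) p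
    exact bwd_per_construct h hw (fun _ => p) rfl (fun _ => hp) (fun _ => hfix)

lemma mem_SigmaA_of_fiber {ξ : Seq2} {x : ℝ} (hx : x ∈ Ifiber f0 f1 d ξ) :
    ξ ∈ SigmaA f0 f1 d := ⟨(ξ, x), ⟨hx.1, hx.2⟩, rfl⟩

lemma mvt_h (hH1 : H1 f0 f1 df0 df1 d) (w : List (Fin 2)) {x y : ℝ} (hxy : x < y) :
    ∃ c ∈ Ioo x y, fWordDeriv f0 f1 df0 df1 w c - 1
        = ((fWord f0 f1 w y - y) - (fWord f0 f1 w x - x)) / (y - x) := by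
  exact exists_hasDerivAt_eq_slope (fun t => fWord f0 f1 w t - t)
    (fun t => fWordDeriv f0 f1 df0 df1 w t - 1) hxy
    ((fWord_continuous hH1 w).sub continuous_id).continuousOn
    (fun t _ => (hasDerivAt_fWord hH1 w t).sub (hasDerivAt_id t))

lemma zeros_atmost_two (hH1 : H1 f0 f1 df0 df1 d) (hH2 : H2 df0 df1 d) {w : List (Fin 2)}
    (h0w : (0 : Fin 2) ∈ w) {x y z' : ℝ}
    (hx : wordAdm f0 f1 d w x ∧ fWord f0 f1 w x = x)
    (hy : wordAdm f0 f1 d w y ∧ fWord f0 f1 w y = y)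
    (hz : wordAdm f0 f1 d w z' ∧ fWord f0 f1 w z' = z')
    (hxy : x < y) (hyz : y < z') : False := by
  obtain ⟨c₁, hc₁, hc₁eq⟩ := mvt_h hH1 w hxy
  obtain ⟨c₂, hc₂, hc₂eq⟩ := mvt_h hH1 w hyz
  rw [hx.2, hy.2] at hc₁eq
  rw [hy.2, hz.2] at hc₂eq
  simp at hc₁eq hc₂eq
  have hadm₁ : wordAdm f0 f1 d w c₁ :=
    wordAdm_of_le hH1 hx.1 hc₁.1.le (le_trans hc₁.2.le (wordAdm_mem_Icc hy.1).2)
  have hadm₂ : wordAdm f0 f1 d w c₂ :=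
    wordAdm_of_le hH1 hy.1 hc₂.1.le (le_trans hc₂.2.le (wordAdm_mem_Icc hz.1).2)
  have := fWordDeriv_strictAnti hH1 hH2 h0w hadm₁ hadm₂ (lt_trans hc₁.2 hc₂.1)
  rw [sub_eq_zero] at hc₁eq hc₂eq
  rw [hc₁eq, hc₂eq] at this
  exact lt_irrefl 1 this

end Aux9
section Aux10

variable {f0 f1 df0 df1 : ℝ → ℝ} {d : ℝ}

lemma fWord_le_one (h : H1 f0 f1 df0 df1 d) (w : List (Fin 2)) {y : ℝ} (hy : y ≤ 1) :
    fWord f0 f1 w y ≤ 1 := by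
  induction w generalizing y with
  | nil => exact hy
  | cons i u ih =>
    rw [fWord_cons]
    apply ih
    by_cases hi : i = 0
    · rw [if_pos hi, ← h.f0_one]; exact h.mono0.monotone hy
    · rw [if_neg hi]; exact le_trans (h.mono1.monotone hy) h.f1_one_mem.2

lemma fWord_one_lt (h : H1 f0 f1 df0 df1 d) {w : List (Fin 2)} (hone : (1 : Fin 2) ∈ w) :
    fWord f0 f1 w 1 < 1 := by
  induction w with
  | nil => simp at hone
  | cons i u ih =>
    rw [fWord_cons]
    by_cases hi : i = 0
    · rw [if_pos hi, h.f0_one]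
      have hu : (1 : Fin 2) ∈ u := by
        rcases List.mem_cons.1 hone with h' | h'
        · rw [hi] at h'; exact absurd h' (by decide)
        · exact h'
      exact ih hu
    · rw [if_neg hi]
      calc fWord f0 f1 u (f1 1) < fWord f0 f1 u 1 := fWord_strictMono h u h.f1_one_lt
      _ ≤ 1 := fWord_le_one h u le_rfl

end Aux10
/-! ## Statement 13 -/

theorem statement_13 (f0 f1 df0 df1 : ℝ → ℝ) (d : ℝ) (hH1 : H1 f0 f1 df0 df1 d)
    (hH2 : H2 df0 df1 d) (w : List (Fin 2)) (hw : w ≠ [])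
    (hI : (IWord f0 f1 d w).Nonempty) :
    ((∃ p : ℝ, wordAdm f0 f1 d w p ∧ fWord f0 f1 w p = p) →
      perSeq w ∈ SigmaA f0 f1 d ∧
      ((∃ p₁ p₂ : ℝ, p₁ < p₂ ∧
          { x : ℝ | wordAdm f0 f1 d w x ∧ fWord f0 f1 w x = x } = {p₁, p₂} ∧
          1 < fWordDeriv f0 f1 df0 df1 w p₁ ∧ fWordDeriv f0 f1 df0 df1 w p₂ < 1 ∧
          Ifiber f0 f1 d (perSeq w) = Icc p₁ p₂) ∨
        (∃ p : ℝ, { x : ℝ | wordAdm f0 f1 d w x ∧ fWord f0 f1 w x = x } = {p} ∧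
          fWordDeriv f0 f1 df0 df1 w p = 1 ∧ Ifiber f0 f1 d (perSeq w) = {p}))) ∧
    ((¬ ∃ p : ℝ, wordAdm f0 f1 d w p ∧ fWord f0 f1 w p = p) →
      perSeq w ∉ SigmaA f0 f1 d) := by
  have h1mem : (1:ℝ) ∈ IWord f0 f1 d w := one_mem_IWord hH1 hI
  have hg1 : fWord f0 f1 w 1 ≤ 1 := (wordAdm_fWord_mem h1mem).2
  have hamem : wordAdm f0 f1 d w (aWord f0 f1 d w) := aWord_mem hH1 hI
  constructor
  · -- CASE 1 : there is a fixed point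
    rintro ⟨p0, hp0⟩
    have h0w : (0 : Fin 2) ∈ w := by
      by_contra h0
      have hall1 : ∀ i ∈ w, i = 1 :=
        fun i hi => (fin2 i).resolve_left (fun h' => h0 (h' ▸ hi))
      exact absurd hp0.2 (ne_of_lt (allone_fWord_lt hH1 hw hall1 hp0.1))
    set Z := {x : ℝ | wordAdm f0 f1 d w x ∧ fWord f0 f1 w x = x} with hZdef
    have hZsub : Z ⊆ Icc (0:ℝ) 1 := fun x hx => wordAdm_mem_Icc hx.1
    have hZne : Z.Nonempty := ⟨p0, hp0⟩
    have hZclosed : IsClosed Z := by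
      have h' : Z = IWord f0 f1 d w ∩ {x | fWord f0 f1 w x = x} := rfl
      rw [h']
      exact (isClosed_IWord hH1 w).inter (isClosed_eq (fWord_continuous hH1 w) continuous_id)
    have hbb : BddBelow Z := ⟨0, fun x hx => (hZsub hx).1⟩
    have hba : BddAbove Z := ⟨1, fun x hx => (hZsub hx).2⟩
    set p₁ := sInf Z with hp1def
    set p₂ := sSup Z with hp2def
    have hp₁ : p₁ ∈ Z := hZclosed.csInf_mem hZne hbb
    have hp₂ : p₂ ∈ Z := hZclosed.csSup_mem hZne hba
    have hple : p₁ ≤ p₂ := csInf_le_csSup hZne hbb hba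
    have hZmem : ∀ x ∈ Z, p₁ ≤ x ∧ x ≤ p₂ := fun x hx => ⟨csInf_le hbb hx, le_csSup hba hx⟩
    have hZtwo : ∀ x ∈ Z, x = p₁ ∨ x = p₂ := by
      intro x hx
      rcases eq_or_lt_of_le (hZmem x hx).1 with h' | h'
      · exact Or.inl h'.symm
      rcases eq_or_lt_of_le (hZmem x hx).2 with h'' | h''
      · exact Or.inr h''
      exact absurd (zeros_atmost_two hH1 hH2 h0w hp₁ hx hp₂ h' h'') not_false
    have hp₂le1 : p₂ ≤ 1 := (hZsub hp₂).2
    -- h(a) ≤ 0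
    have ha_le : fWord f0 f1 w (aWord f0 f1 d w) ≤ aWord f0 f1 d w := by
      by_cases hone : (1 : Fin 2) ∈ w
      · rw [fWord_aWord_eq_zero hH1 hH2 hone hI]
        exact (wordAdm_mem_Icc hamem).1
      · have hz : ∀ i ∈ w, i = 0 :=
          fun i hi => (fin2 i).resolve_right (fun h' => hone (h' ▸ hi))
        have h0adm : (0:ℝ) ∈ IWord f0 f1 d w := allzero_wordAdm hH1 hz (by norm_num)
        have ha0 : aWord f0 f1 d w = 0 :=
          le_antisymm (csInf_le (bddBelow_IWord w) h0adm)
            (le_csInf hI fun x hx => (wordAdm_mem_Icc hx).1)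
        rw [ha0, allzero_fWord_zero hH1 hz]
    have hfib0 : p0 ∈ Ifiber f0 f1 d (perSeq w) := per_fixed_in_fiber hH1 hw hp0.1 hp0.2
    refine ⟨mem_SigmaA_of_fiber hfib0, ?_⟩
    rcases eq_or_lt_of_le hple with heq | hlt
    · -- PARABOLIC CASE : single fixed point p := p₁
      right
      have hZsingle : Z = {p₁} := by
        ext x
        constructor
        · intro hx
          rcases hZtwo x hx with h' | h'
          · exact h'
          · rw [← heq] at h'; exact h'
        · intro hx; rw [Set.mem_singleton_iff] at hx; rw [hx]; exact hp₁
      have hone : (1 : Fin 2) ∈ w := by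
        by_contra hone
        have hz : ∀ i ∈ w, i = 0 :=
          fun i hi => (fin2 i).resolve_right (fun h' => hone (h' ▸ hi))
        have h0Z : (0:ℝ) ∈ Z :=
          ⟨allzero_wordAdm hH1 hz (by norm_num), allzero_fWord_zero hH1 hz⟩
        have h1Z : (1:ℝ) ∈ Z := ⟨h1mem, allzero_fWord_one hH1 hz⟩
        rw [hZsingle] at h0Z h1Z
        rw [Set.mem_singleton_iff] at h0Z h1Z
        rw [← h0Z] at h1Z
        norm_num at h1Z
      have hga : fWord f0 f1 w (aWord f0 f1 d w) < aWord f0 f1 d w := by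
        rw [fWord_aWord_eq_zero hH1 hH2 hone hI]
        exact aWord_pos hH1 hone hI
      have hg1lt : fWord f0 f1 w 1 < 1 := fWord_one_lt hH1 hone
      have hap : aWord f0 f1 d w < p₁ := by
        rcases eq_or_lt_of_le (csInf_le (bddBelow_IWord w) hp₁.1 :
            aWord f0 f1 d w ≤ p₁) with h' | h'
        · exfalso
          have hga2 := hga
          rw [show aWord f0 f1 d w = sInf (IWord f0 f1 d w) from rfl, h'] at hga2
          have := hp₁.2; linarith
        · exact h'
      have hp1lt1 : p₁ < 1 := by
        rcases eq_or_lt_of_le (hZsub hp₁).2 with h' | h'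
        · exfalso; have h2 := hp₁.2; rw [h'] at h2; linarith
        · exact h'
      -- sign : g q < q away from p₁
      have hsign : ∀ q, wordAdm f0 f1 d w q → q ≠ p₁ → fWord f0 f1 w q < q := by
        intro q hqadm hqne
        rcases lt_trichotomy (fWord f0 f1 w q - q) 0 with hneg | h0 | hpos
        · linarith
        · exact absurd (Set.mem_singleton_iff.1 (hZsingle ▸ (⟨hqadm, by linarith⟩ : q ∈ Z))) hqne
        · exfalso
          have hq1 : q ≤ 1 := (wordAdm_mem_Icc hqadm).2
          have haq : aWord f0 f1 d w ≤ q := csInf_le (bddBelow_IWord w) hqadm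
          rcases lt_trichotomy q p₁ with hqp | hqp | hqp
          · -- zero in [a, q]
            have haq' : aWord f0 f1 d w < q := by
              rcases eq_or_lt_of_le haq with h' | h'
              · exfalso; rw [← h'] at hpos; linarith
              · exact h'
            have := intermediate_value_Icc haq
              ((fWord_continuous hH1 w).sub continuous_id).continuousOn
            obtain ⟨c, hc, hceq⟩ := this (show (0:ℝ) ∈ Icc _ _ by
              constructor <;> simp <;> linarith)
            have hcadm : wordAdm f0 f1 d w c :=
              wordAdm_of_le hH1 hamem hc.1 (le_trans hc.2 hq1)
            have hcZ : c ∈ Z := ⟨hcadm, by simp at hceq; linarith⟩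
            rw [hZsingle, Set.mem_singleton_iff] at hcZ
            rw [hcZ] at hc
            linarith [hc.2]
          · exact hqne hqp
          · -- zero in [q, 1]
            have := intermediate_value_Icc' hq1
              ((fWord_continuous hH1 w).sub continuous_id).continuousOn
            obtain ⟨c, hc, hceq⟩ := this (show (0:ℝ) ∈ Icc _ _ by
              constructor <;> simp <;> linarith)
            have hcadm : wordAdm f0 f1 d w c := wordAdm_of_le hH1 hqadm hc.1 hc.2
            have hcZ : c ∈ Z := ⟨hcadm, by simp at hceq; linarith⟩
            rw [hZsingle, Set.mem_singleton_iff] at hcZ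
            rw [hcZ] at hc
            linarith [hc.1]
      -- parabolic derivative
      have hDp : fWordDeriv f0 f1 df0 df1 w p₁ = 1 := by
        have hmax : IsLocalMax (fun t => fWord f0 f1 w t - t) p₁ := by
          have hnhds : Ioo (aWord f0 f1 d w) 1 ∈ nhds p₁ := Ioo_mem_nhds hap hp1lt1
          refine Filter.eventually_of_mem hnhds (fun t ht => ?_)
          have htadm : wordAdm f0 f1 d w t :=
            wordAdm_of_le hH1 hamem ht.1.le ht.2.le
          by_cases htp : t = p₁
          · rw [htp]
          · have := hsign t htadm htp
            have hp1z := hp₁.2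
            simp only
            linarith
        have := hmax.hasDerivAt_eq_zero
          ((hasDerivAt_fWord hH1 w p₁).sub (hasDerivAt_id p₁))
        linarith
      refine ⟨p₁, hZsingle, hDp, ?_⟩
      -- fiber = {p₁}
      ext x
      constructor
      · intro hx
        have hxadm : wordAdm f0 f1 d w x := by
          have := fwd_per_to_iterates hH1 hw hx.1 0
          simpa using this
        rw [Set.mem_singleton_iff]
        by_contra hxne
        rcases lt_trichotomy x p₁ with hxp | hxp | hxp
        · -- forward orbit decreases : contradiction
          refine nofix_fwd hH1 (fwd_per_to_iterates hH1 hw hx.1) (hsign x hxadm hxne) ?_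
          intro y hyadm hyx hyfix
          have hyZ : y ∈ Z := ⟨hyadm, hyfix⟩
          rw [hZsingle, Set.mem_singleton_iff] at hyZ
          rw [hyZ] at hyx
          linarith
        · exact hxne hxp
        · -- backward orbit increases : contradiction
          obtain ⟨z, hz0, hzk⟩ := bwd_per_extract hH1 hw hx.2
          refine nofix_bwd hH1 z (fun k => ?_) (fun k => (hzk k).2) ?_ ?_
          · cases k with
            | zero => rw [hz0]; exact hxadm
            | succ k => exact (hzk k).1
          · rw [hz0]; exact hsign x hxadm hxne
          · intro y hyadm hyx hyfix
            have hyZ : y ∈ Z := ⟨hyadm, hyfix⟩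
            rw [hZsingle, Set.mem_singleton_iff] at hyZ
            rw [hz0] at hyx
            rw [hyZ] at hyx
            linarith
      · intro hx
        rw [Set.mem_singleton_iff] at hx
        rw [hx]
        exact per_fixed_in_fiber hH1 hw hp₁.1 hp₁.2
    · -- HYPERBOLIC CASE : two fixed points
      left
      have hmid : p₁ < (p₁ + p₂)/2 ∧ (p₁ + p₂)/2 < p₂ := by constructor <;> linarith
      set q := (p₁ + p₂)/2 with hqdef
      have hq1 : q ≤ 1 := by linarith
      have hqadm : wordAdm f0 f1 d w q := wordAdm_of_le hH1 hp₁.1 hmid.1.le hq1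
      have hqne : fWord f0 f1 w q ≠ q := by
        intro he
        rcases hZtwo q ⟨hqadm, he⟩ with h' | h' <;> (rw [h'] at hmid; linarith [hmid.1, hmid.2])
      have hadm_between : ∀ c, p₁ ≤ c → c ≤ p₂ → wordAdm f0 f1 d w c :=
        fun c hc1 hc2 => wordAdm_of_le hH1 hp₁.1 hc1 (le_trans hc2 hp₂le1)
      have hqpos : 0 < fWord f0 f1 w q - q := by
        rcases lt_trichotomy (fWord f0 f1 w q - q) 0 with hneg | h0 | hpos
        · exfalso
          obtain ⟨c₁, hc₁, hc₁eq⟩ := mvt_h hH1 (df0 := df0) (df1 := df1) w hmid.1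
          obtain ⟨c₂, hc₂, hc₂eq⟩ := mvt_h hH1 (df0 := df0) (df1 := df1) w hmid.2
          rw [hp₁.2, sub_self, sub_zero] at hc₁eq
          rw [hp₂.2, sub_self, zero_sub] at hc₂eq
          have h1 : fWordDeriv f0 f1 df0 df1 w c₁ - 1 < 0 := by
            rw [hc₁eq]; exact div_neg_of_neg_of_pos hneg (by linarith [hmid.1])
          have h2 : 0 < fWordDeriv f0 f1 df0 df1 w c₂ - 1 := by
            rw [hc₂eq]; apply div_pos (by linarith) (by linarith [hmid.2])
          have hanti := fWordDeriv_anti hH1 hH2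
            (hadm_between c₁ hc₁.1.le (by linarith [hc₁.2]))
            (hadm_between c₂ (by linarith [hc₂.1]) hc₂.2.le)
            (lt_trans hc₁.2 hc₂.1)
          linarith
        · exact absurd (by linarith : fWord f0 f1 w q = q) hqne
        · exact hpos
      -- derivative at p₁
      have hd1 : 1 < fWordDeriv f0 f1 df0 df1 w p₁ := by
        obtain ⟨c, hc, hceq⟩ := mvt_h hH1 (df0 := df0) (df1 := df1) w hmid.1
        rw [hp₁.2, sub_self, sub_zero] at hceq
        have hcpos : 0 < fWordDeriv f0 f1 df0 df1 w c - 1 := by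
          rw [hceq]; exact div_pos hqpos (by linarith [hmid.1])
        have := fWordDeriv_strictAnti hH1 hH2 h0w hp₁.1
          (hadm_between c hc.1.le (by linarith [hc.2])) hc.1
        linarith
      have hd2 : fWordDeriv f0 f1 df0 df1 w p₂ < 1 := by
        obtain ⟨c, hc, hceq⟩ := mvt_h hH1 (df0 := df0) (df1 := df1) w hmid.2
        rw [hp₂.2, sub_self, zero_sub] at hceq
        have hcneg : fWordDeriv f0 f1 df0 df1 w c - 1 < 0 := by
          rw [hceq]; exact div_neg_of_neg_of_pos (by linarith) (by linarith [hmid.2])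
        have := fWordDeriv_strictAnti hH1 hH2 h0w
          (hadm_between c (by linarith [hc.1]) hc.2.le) hp₂.1 hc.2
        linarith
      -- signs outside [p₁, p₂]
      have hneg_lt : ∀ x, wordAdm f0 f1 d w x → x < p₁ → fWord f0 f1 w x < x := by
        intro x hxadm hxlt
        rcases lt_trichotomy (fWord f0 f1 w x - x) 0 with hneg | h0 | hpos
        · linarith
        · exfalso
          rcases hZtwo x ⟨hxadm, by linarith⟩ with h' | h' <;> rw [h'] at hxlt <;> linarith
        · exfalso
          obtain ⟨c, hc, hceq⟩ := mvt_h hH1 (df0 := df0) (df1 := df1) w hxlt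
          rw [hp₁.2, sub_self, zero_sub] at hceq
          have hcneg : fWordDeriv f0 f1 df0 df1 w c - 1 < 0 := by
            rw [hceq]; exact div_neg_of_neg_of_pos (by linarith) (by linarith)
          have hcadm : wordAdm f0 f1 d w c :=
            wordAdm_of_le hH1 hxadm hc.1.le (by linarith [hc.2, (hZsub hp₁).2])
          have := fWordDeriv_anti hH1 hH2 hcadm hp₁.1 hc.2
          linarith
      have hneg_gt : ∀ x, wordAdm f0 f1 d w x → p₂ < x → fWord f0 f1 w x < x := by
        intro x hxadm hxgt
        rcases lt_trichotomy (fWord f0 f1 w x - x) 0 with hneg | h0 | hpos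
        · linarith
        · exfalso
          rcases hZtwo x ⟨hxadm, by linarith⟩ with h' | h' <;> rw [h'] at hxgt <;> linarith
        · exfalso
          obtain ⟨c, hc, hceq⟩ := mvt_h hH1 (df0 := df0) (df1 := df1) w hxgt
          rw [hp₂.2, sub_self, sub_zero] at hceq
          have hcpos : 0 < fWordDeriv f0 f1 df0 df1 w c - 1 := by
            rw [hceq]; exact div_pos hpos (by linarith)
          have hcadm : wordAdm f0 f1 d w c :=
            wordAdm_of_le hH1 hp₂.1 hc.1.le (by linarith [hc.2, (wordAdm_mem_Icc hxadm).2])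
          have := fWordDeriv_anti hH1 hH2 hp₂.1 hcadm hc.1
          linarith
      refine ⟨p₁, p₂, hlt, ?_, hd1, hd2, ?_⟩
      · -- the fixed point set is exactly {p₁, p₂}
        ext x
        constructor
        · intro hx
          rcases hZtwo x hx with h' | h' <;> simp [h']
        · intro hx
          rcases hx with h' | h'
          · rw [h']; exact hp₁
          · rw [Set.mem_singleton_iff] at h'; rw [h']; exact hp₂
      · -- fiber = Icc p₁ p₂
        ext x
        constructor
        · intro hx
          have hxadm : wordAdm f0 f1 d w x := by
            have := fwd_per_to_iterates hH1 hw hx.1 0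
            simpa using this
          rw [mem_Icc]
          constructor
          · by_contra hxlt
            push_neg at hxlt
            refine nofix_fwd hH1 (fwd_per_to_iterates hH1 hw hx.1)
              (hneg_lt x hxadm hxlt) ?_
            intro y hyadm hyx hyfix
            rcases hZtwo y ⟨hyadm, hyfix⟩ with h' | h' <;> rw [h'] at hyx <;> linarith
          · by_contra hxgt
            push_neg at hxgt
            obtain ⟨z, hz0, hzk⟩ := bwd_per_extract hH1 hw hx.2
            refine nofix_bwd hH1 z (fun k => ?_) (fun k => (hzk k).2) ?_ ?_
            · cases k with
              | zero => rw [hz0]; exact hxadm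
              | succ k => exact (hzk k).1
            · rw [hz0]; exact hneg_gt x hxadm hxgt
            · intro y hyadm hyx hyfix
              rw [hz0] at hyx
              rcases hZtwo y ⟨hyadm, hyfix⟩ with h' | h' <;> rw [h'] at hyx <;> linarith
        · intro hx
          rw [mem_Icc] at hx
          have hinv : ∀ k : ℕ, p₁ ≤ (fWord f0 f1 w)^[k] x ∧ (fWord f0 f1 w)^[k] x ≤ p₂ := by
            intro k
            induction k with
            | zero => simpa using hx
            | succ k ih =>
              rw [Function.iterate_succ_apply']
              constructor
              · calc p₁ = fWord f0 f1 w p₁ := hp₁.2.symm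
                _ ≤ fWord f0 f1 w ((fWord f0 f1 w)^[k] x) :=
                    (fWord_strictMono hH1 w).monotone ih.1
              · calc fWord f0 f1 w ((fWord f0 f1 w)^[k] x) ≤ fWord f0 f1 w p₂ :=
                    (fWord_strictMono hH1 w).monotone ih.2
                _ = p₂ := hp₂.2
          constructor
          · show forwardAdmissible f0 f1 d (perSeq w) x
            exact fwd_per_of_iterates hH1 hw
              (fun k => hadm_between _ (hinv k).1 (hinv k).2)
          · show backwardAdmissible f0 f1 d (perSeq w) x
            -- build a backward orbit inside [p₁, p₂] by the intermediate value theorem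
            have hpre : ∀ t : {t : ℝ // p₁ ≤ t ∧ t ≤ p₂},
                ∃ s : {t : ℝ // p₁ ≤ t ∧ t ≤ p₂}, fWord f0 f1 w s.1 = t.1 := by
              rintro ⟨t, ht1, ht2⟩
              have hiv := intermediate_value_Icc hple (fWord_continuous hH1 w).continuousOn
              rw [hp₁.2, hp₂.2] at hiv
              obtain ⟨s, hs, hgs⟩ := hiv (Set.mem_Icc.2 ⟨ht1, ht2⟩)
              exact ⟨⟨s, hs.1, hs.2⟩, hgs⟩
            set pick : {t : ℝ // p₁ ≤ t ∧ t ≤ p₂} → {t : ℝ // p₁ ≤ t ∧ t ≤ p₂} :=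
              fun t => (hpre t).choose with hpick
            have hpickspec : ∀ t, fWord f0 f1 w (pick t).1 = t.1 := fun t => (hpre t).choose_spec
            set zs : ℕ → {t : ℝ // p₁ ≤ t ∧ t ≤ p₂} := fun k => pick^[k] ⟨x, hx⟩ with hzs
            refine bwd_per_construct hH1 hw (fun k => (zs k).1) (by simp [hzs]) ?_ ?_
            · intro k
              exact hadm_between _ (zs k).2.1 (zs k).2.2
            · intro k
              show fWord f0 f1 w (zs (k+1)).1 = (zs k).1
              have hstep1 : zs (k+1) = pick (zs k) := by
                rw [hzs]; simp [Function.iterate_succ_apply']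
              rw [hstep1, hpickspec]
  · -- CASE 2 : no fixed point
    intro hno hmem
    obtain ⟨⟨ξ, x⟩, hΓ, hfst⟩ := hmem
    simp only at hfst
    subst hfst
    have hfwd : forwardAdmissible f0 f1 d (perSeq w) x := hΓ.1
    have hbwd : backwardAdmissible f0 f1 d (perSeq w) x := hΓ.2
    have hxadm : wordAdm f0 f1 d w x := by
      have := fwd_per_to_iterates hH1 hw hfwd 0
      simpa using this
    have hg1lt : fWord f0 f1 w 1 < 1 := by
      rcases eq_or_lt_of_le hg1 with h' | h'
      · exact absurd ⟨1, h1mem, h'⟩ hno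
      · exact h'
    have hsign : ∀ q, wordAdm f0 f1 d w q → fWord f0 f1 w q < q := by
      intro q hqadm
      rcases lt_trichotomy (fWord f0 f1 w q - q) 0 with hneg | h0 | hpos
      · linarith
      · exact absurd ⟨q, hqadm, by linarith⟩ hno
      · exfalso
        have hq1 : q ≤ 1 := (wordAdm_mem_Icc hqadm).2
        have := intermediate_value_Icc' hq1
          ((fWord_continuous hH1 w).sub continuous_id).continuousOn
        obtain ⟨c, hc, hceq⟩ := this (show (0:ℝ) ∈ Icc _ _ by
          constructor <;> simp <;> linarith)
        have hcadm : wordAdm f0 f1 d w c := wordAdm_of_le hH1 hqadm hc.1 hc.2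
        simp at hceq
        exact hno ⟨c, hcadm, by linarith⟩
    obtain ⟨z, hz0, hzk⟩ := bwd_per_extract hH1 hw hbwd
    refine nofix_bwd hH1 z (fun k => ?_) (fun k => (hzk k).2) ?_ ?_
    · cases k with
      | zero => rw [hz0]; exact hxadm
      | succ k => exact (hzk k).1
    · rw [hz0]; exact hsign x hxadm
    · intro y hyadm _ hyfix
      exact hno ⟨y, hyadm, hyfix⟩

end DGR
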